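/- arXiv:1904.02810 — 10 statements merged into one kernel-verified Lean document; each statement's English description precedes it below -/
import Mathlib

section
/- Let p, e ∈ ℝ³ with e₃ > 0 and e ≠ p. Then the following are equivalent: (i) for every t ∈ T one has ‖t − p‖ ≤ ‖t − e‖, and there exists t ∈ T with ‖t − p‖ = ‖t − e‖; (ii) p₃ < 0 and e = (p₁, p₂, −p₃). (Lemma 1: in the one-pursuer game the barrier 𝓑^i is the mirror point of the pursuer across T when the pursuer lies below the target plane, and is empty otherwise.) -/
lemma nsq3 (x y : EuclideanSpace ℝ (Fin 3)) :
    ‖x - y‖^2 = (x 0 - y 0)^2 + (x 1 - y 1)^2 + (x 2 - y 2)^2 := by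
  rw [EuclideanSpace.norm_eq, Real.sq_sqrt (by positivity)]
  simp [Fin.sum_univ_three, sq_abs]

/-- Lemma 1 (barrier): in the one-pursuer game, the barrier is the mirror point of the
pursuer across the target plane `T = {z | z₃ = 0}` when the pursuer lies below `T`,
and is empty otherwise. -/
theorem one_pursuer_barrier (p e : EuclideanSpace ℝ (Fin 3))
    (he : e 2 > 0) (hne : e ≠ p) :
    ((∀ t : EuclideanSpace ℝ (Fin 3), t 2 = 0 → ‖t - p‖ ≤ ‖t - e‖) ∧
      (∃ t : EuclideanSpace ℝ (Fin 3), t 2 = 0 ∧ ‖t - p‖ = ‖t - e‖)) ↔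
    (p 2 < 0 ∧ e 0 = p 0 ∧ e 1 = p 1 ∧ e 2 = -(p 2)) := by
  constructor
  · rintro ⟨hall, t, ht2, heq⟩
    have key : ∀ u : EuclideanSpace ℝ (Fin 3), u 2 = 0 →
        (u 0 - p 0)^2 + (u 1 - p 1)^2 + (p 2)^2 ≤
        (u 0 - e 0)^2 + (u 1 - e 1)^2 + (e 2)^2 := by
      intro u hu
      have h := hall u hu
      have h1 := nsq3 u p
      have h2 := nsq3 u e
      rw [hu] at h1 h2
      nlinarith [norm_nonneg (u - p), norm_nonneg (u - e)]
    set C := (e 0)^2 + (e 1)^2 + (e 2)^2 - ((p 0)^2 + (p 1)^2 + (p 2)^2) with hC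
    have h0 : e 0 = p 0 := by
      by_contra h
      have ha : e 0 - p 0 ≠ 0 := sub_ne_zero.mpr h
      set s := (|C| + 1) / (2 * (e 0 - p 0)) with hs
      have h2s : 2 * (e 0 - p 0) * s = |C| + 1 := by
        rw [hs]; field_simp
      have hk := key (show EuclideanSpace ℝ (Fin 3) from !₂[s, 0, 0]) rfl
      simp only [WithLp.ofLp_toLp, Matrix.cons_val_zero, Matrix.cons_val_one, Matrix.head_cons] at hk
      nlinarith [le_abs_self C, abs_nonneg C]
    have h1 : e 1 = p 1 := by
      by_contra h
      have ha : e 1 - p 1 ≠ 0 := sub_ne_zero.mpr h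
      set s := (|C| + 1) / (2 * (e 1 - p 1)) with hs
      have h2s : 2 * (e 1 - p 1) * s = |C| + 1 := by
        rw [hs]; field_simp
      have hk := key (show EuclideanSpace ℝ (Fin 3) from !₂[0, s, 0]) rfl
      simp only [WithLp.ofLp_toLp, Matrix.cons_val_zero, Matrix.cons_val_one, Matrix.head_cons] at hk
      nlinarith [le_abs_self C, abs_nonneg C]
    have hsq : (p 2)^2 = (e 2)^2 := by
      have hle := key t ht2
      have h1' := nsq3 t p
      have h2' := nsq3 t e
      rw [ht2] at h1' h2'
      rw [h0, h1] at h2'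
      have : ‖t - p‖^2 = ‖t - e‖^2 := by rw [heq]
      nlinarith
    have h2 : e 2 = -(p 2) := by
      have : (e 2 - p 2) * (e 2 + p 2) = 0 := by nlinarith
      rcases mul_eq_zero.mp this with h | h
      · exfalso
        apply hne
        have he2 : e 2 = p 2 := by linarith
        ext i
        fin_cases i <;> simp [h0, h1, he2]
      · linarith
    exact ⟨by linarith, h0, h1, h2⟩
  · rintro ⟨hp2, h0, h1, h2⟩
    have hEq : ∀ u : EuclideanSpace ℝ (Fin 3), u 2 = 0 → ‖u - p‖ = ‖u - e‖ := by
      intro u hu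
      have h1' := nsq3 u p
      have h2' := nsq3 u e
      rw [hu] at h1' h2'
      have hsq : ‖u - p‖^2 = ‖u - e‖^2 := by
        rw [h1', h2', h0, h1, h2]; ring
      have hn1 := norm_nonneg (u - p)
      have hn2 := norm_nonneg (u - e)
      nlinarith
    refine ⟨fun u hu => le_of_eq (hEq u hu), ⟨(show EuclideanSpace ℝ (Fin 3) from !₂[0,0,0]), rfl, hEq _ rfl⟩⟩
end

section
/- Let p, e ∈ ℝ³ with e₃ > 0. Then (for every t ∈ T, ‖t − p‖ < ‖t − e‖) if and only if (e₁ = p₁, e₂ = p₂, and e₃ > |p₃|). (Lemma 1: the pursuer winning subspace of the one-pursuer game is the open vertical ray above the pursuer's projection starting at height |p₃|.) -/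
lemma norm_lt_iff3 (x y : EuclideanSpace ℝ (Fin 3)) :
    ‖x‖ < ‖y‖ ↔ x 0 ^ 2 + x 1 ^ 2 + x 2 ^ 2 < y 0 ^ 2 + y 1 ^ 2 + y 2 ^ 2 := by
  rw [EuclideanSpace.norm_eq, EuclideanSpace.norm_eq, Fin.sum_univ_three, Fin.sum_univ_three,
    Real.sqrt_lt_sqrt_iff (by positivity)]
  simp [Real.norm_eq_abs, sq_abs]

/-- Lemma 1 (pursuer winning subspace): the pursuer winning subspace of the one-pursuer
game is the open vertical ray above the pursuer's projection starting at height `|p₃|`. -/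
theorem one_pursuer_winning (p e : EuclideanSpace ℝ (Fin 3)) (he : e 2 > 0) :
    (∀ t : EuclideanSpace ℝ (Fin 3), t 2 = 0 → ‖t - p‖ < ‖t - e‖) ↔
    (e 0 = p 0 ∧ e 1 = p 1 ∧ e 2 > |p 2|) := by
  have key : ∀ t : EuclideanSpace ℝ (Fin 3), ‖t - p‖ < ‖t - e‖ ↔
      (t 0 - p 0) ^ 2 + (t 1 - p 1) ^ 2 + (t 2 - p 2) ^ 2 <
      (t 0 - e 0) ^ 2 + (t 1 - e 1) ^ 2 + (t 2 - e 2) ^ 2 := by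
    intro t
    rw [norm_lt_iff3]
    simp [PiLp.sub_apply]
  constructor
  · intro H
    have hC : p 0 ^ 2 + p 1 ^ 2 + p 2 ^ 2 < e 0 ^ 2 + e 1 ^ 2 + e 2 ^ 2 := by
      have := (key (0 : EuclideanSpace ℝ (Fin 3))).mp (H 0 (by simp))
      simpa using this
    have h0 : e 0 = p 0 := by
      by_contra hne
      have ha : e 0 - p 0 ≠ 0 := sub_ne_zero.mpr hne
      set a := e 0 - p 0 with haa
      set C := e 0 ^ 2 + e 1 ^ 2 + e 2 ^ 2 - (p 0 ^ 2 + p 1 ^ 2 + p 2 ^ 2) with hCC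
      set t : EuclideanSpace ℝ (Fin 3) := !₂[C / (2 * a), 0, 0] with ht
      have ht0 : t 0 = C / (2 * a) := rfl
      have ht1 : t 1 = 0 := rfl
      have ht2 : t 2 = 0 := rfl
      have := (key t).mp (H t ht2)
      rw [ht0, ht1, ht2] at this
      have hca : C / (2 * a) * (2 * a) = C := div_mul_cancel₀ C (by simpa using ha)
      nlinarith [this, hca]
    have h1 : e 1 = p 1 := by
      by_contra hne
      have ha : e 1 - p 1 ≠ 0 := sub_ne_zero.mpr hne
      set a := e 1 - p 1 with haa
      set C := e 0 ^ 2 + e 1 ^ 2 + e 2 ^ 2 - (p 0 ^ 2 + p 1 ^ 2 + p 2 ^ 2) with hCC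
      set t : EuclideanSpace ℝ (Fin 3) := !₂[0, C / (2 * a), 0] with ht
      have ht0 : t 0 = 0 := rfl
      have ht1 : t 1 = C / (2 * a) := rfl
      have ht2 : t 2 = 0 := rfl
      have := (key t).mp (H t ht2)
      rw [ht0, ht1, ht2] at this
      have hca : C / (2 * a) * (2 * a) = C := div_mul_cancel₀ C (by simpa using ha)
      nlinarith [this, hca]
    refine ⟨h0, h1, ?_⟩
    rw [h0, h1] at hC
    have hsq : p 2 ^ 2 < e 2 ^ 2 := by linarith
    exact abs_lt.mpr ⟨by nlinarith, by nlinarith⟩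
  · rintro ⟨h0, h1, h2⟩ t ht2
    rw [key t, ht2]
    have hsq : p 2 ^ 2 < e 2 ^ 2 := sq_lt_sq' (abs_lt.mp h2).1 (abs_lt.mp h2).2
    rw [h0, h1]
    nlinarith [hsq]
end

section
/- Let a, b ∈ ℝ³ with (a₁, a₂) ≠ (b₁, b₂), let c = c_{a,b} and r = r_{a,b}, and let e ∈ ℝ³ with e₃ > 0, e ≠ a, e ≠ b. Then the following are equivalent: (i) for every t ∈ T, min(‖t − a‖, ‖t − b‖) ≤ ‖t − e‖, and there exists t ∈ T with ‖t − e‖ ≤ min(‖t − a‖, ‖t − b‖); (ii) e = (a₁, a₂, −a₃), or e = (b₁, b₂, −b₃), or there exists β ∈ (0, 1) with (e₁, e₂) = β(a₁, a₂) + (1 − β)(b₁, b₂) and ‖e − c‖ = r. (Theorem 1: the barrier of the two-active-pursuer game is the union of the two mirror points and a circular arc of radius r centered at c lying in the vertical plane over the segment joining the pursuers' projections.) -/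
set_option maxHeartbeats 1000000

noncomputable section

/-- The point of `ℝ³` with the given three coordinates. -/
def mk3 (x y z : ℝ) : EuclideanSpace ℝ (Fin 3) :=
  (WithLp.equiv 2 (Fin 3 → ℝ)).symm ![x, y, z]

/-- The projection of a point onto the target plane `T = {z | z₃ = 0}`. -/
def projT (p : EuclideanSpace ℝ (Fin 3)) : EuclideanSpace ℝ (Fin 3) :=
  mk3 (p 0) (p 1) 0

lemma lin_nonpos (A B : ℝ) (h : ∀ s : ℝ, 0 < s → A + s*B ≤ 0) : A ≤ 0 ∧ B ≤ 0 := by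
  constructor
  · by_contra hA
    push_neg at hA
    have hd : (0:ℝ) < 2*(|B|+1) := by positivity
    have hs : 0 < A/(2*(|B|+1)) := by positivity
    have h1 := h _ hs
    have h2 := mul_le_mul_of_nonneg_right h1 (le_of_lt hd)
    rw [add_mul, div_mul_eq_mul_div, mul_comm] at h2
    have h3 : 2*(|B|+1) * (A / (2*(|B|+1))) = A := by field_simp
    nlinarith [mul_le_mul_of_nonneg_left (neg_abs_le B) (le_of_lt hA), abs_nonneg B]
  · by_contra hB
    push_neg at hB
    have hs : 0 < (|A|+1)/B := by positivity
    have h1 := h _ hs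
    have h2 : A + ((|A|+1)/B)*B = A + |A| + 1 := by field_simp; ring
    nlinarith [le_abs_self A, neg_abs_le A]

lemma exists_pos_affine (u v g : ℝ) (hD : 0 < u^2+v^2) :
    ∃ x y : ℝ, 0 < 2*u*x+2*v*y+g := by
  refine ⟨((|g|+1)/(2*(u^2+v^2)))*u, ((|g|+1)/(2*(u^2+v^2)))*v, ?_⟩
  have hval : 2*u*(((|g|+1)/(2*(u^2+v^2)))*u) + 2*v*(((|g|+1)/(2*(u^2+v^2)))*v) = |g|+1 := by
    field_simp
  nlinarith [le_abs_self g, neg_abs_le g]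

lemma halfplane (u1 v1 g1 u2 v2 g2 x0 y0 : ℝ)
    (hDA : 0 < u1^2+v1^2) (hDB : 0 < u2^2+v2^2)
    (H1 : ∀ x y : ℝ, 2*u1*x+2*v1*y+g1 ≤ 0 ∨ 2*u2*x+2*v2*y+g2 ≤ 0)
    (h1pt : 0 ≤ 2*u1*x0+2*v1*y0+g1) (h2pt : 0 ≤ 2*u2*x0+2*v2*y0+g2) :
    ∃ L : ℝ, 0 < L ∧ u2 = -L*u1 ∧ v2 = -L*v1 ∧ g2 = -L*g1 := by
  have key2 : ∀ s : ℝ, 0 < s →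
      (2*u2*x0 + 2*v2*y0 + g2) + s*(2*(u1*u2+v1*v2)) ≤ 0 := by
    intro s hs
    rcases H1 (x0 + s*u1) (y0 + s*v1) with h | h
    · exfalso; nlinarith [mul_pos hs hDA]
    · nlinarith
  obtain ⟨hL2le, hiple⟩ := lin_nonpos _ _ key2
  have hip : u1*u2 + v1*v2 ≤ 0 := by linarith
  have hL2z : 2*u2*x0 + 2*v2*y0 + g2 = 0 := le_antisymm hL2le h2pt
  have key1 : ∀ s : ℝ, 0 < s →
      (2*u1*x0 + 2*v1*y0 + g1) + s*(2*(u1*u2+v1*v2)) ≤ 0 := by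
    intro s hs
    rcases H1 (x0 + s*u2) (y0 + s*v2) with h | h
    · nlinarith
    · exfalso; nlinarith [mul_pos hs hDB]
  obtain ⟨hL1le, -⟩ := lin_nonpos _ _ key1
  have hL1z : 2*u1*x0 + 2*v1*y0 + g1 = 0 := le_antisymm hL1le h1pt
  have hcross : u1*v2 - v1*u2 = 0 := by
    by_contra hd
    rcases H1 (x0 + (v2-v1)/(u1*v2 - v1*u2)) (y0 + (u1-u2)/(u1*v2 - v1*u2)) with h | h
    · have hval : 2*u1*(x0 + (v2-v1)/(u1*v2 - v1*u2)) + 2*v1*(y0 + (u1-u2)/(u1*v2 - v1*u2)) + g1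
          = (2*u1*x0 + 2*v1*y0 + g1) + 2*((u1*v2 - v1*u2)/(u1*v2 - v1*u2)) := by ring
      rw [hval, div_self hd, hL1z] at h
      linarith
    · have hval : 2*u2*(x0 + (v2-v1)/(u1*v2 - v1*u2)) + 2*v2*(y0 + (u1-u2)/(u1*v2 - v1*u2)) + g2
          = (2*u2*x0 + 2*v2*y0 + g2) + 2*((u1*v2 - v1*u2)/(u1*v2 - v1*u2)) := by ring
      rw [hval, div_self hd, hL2z] at h
      linarith
  have hDA' : u1^2+v1^2 ≠ 0 := ne_of_gt hDA
  have hu2μ : u2 = ((u1*u2+v1*v2)/(u1^2+v1^2))*u1 := by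
    field_simp
    linear_combination (-v1) * hcross
  have hv2μ : v2 = ((u1*u2+v1*v2)/(u1^2+v1^2))*v1 := by
    field_simp
    linear_combination u1 * hcross
  have hμle : (u1*u2+v1*v2)/(u1^2+v1^2) ≤ 0 := div_nonpos_of_nonpos_of_nonneg hip (le_of_lt hDA)
  have hμne : (u1*u2+v1*v2)/(u1^2+v1^2) ≠ 0 := by
    intro hμ0
    rw [hμ0, zero_mul] at hu2μ hv2μ
    rw [hu2μ, hv2μ] at hDB
    norm_num at hDB
  have hμ : (u1*u2+v1*v2)/(u1^2+v1^2) < 0 := lt_of_le_of_ne hμle hμne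
  refine ⟨-((u1*u2+v1*v2)/(u1^2+v1^2)), by linarith, by linarith [hu2μ], by linarith [hv2μ], ?_⟩
  linear_combination hL2z - ((u1*u2+v1*v2)/(u1^2+v1^2))*hL1z - 2*x0*hu2μ - 2*y0*hv2μ

theorem fwd_coord (a0 a1 a2 b0 b1 b2 c0 c1 e0 e1 e2 : ℝ)
    (hab : ¬(a0 = b0 ∧ a1 = b1))
    (hceq : (c0-a0)^2+(c1-a1)^2+a2^2 = (c0-b0)^2+(c1-b1)^2+b2^2)
    (hea : ¬(e0 = a0 ∧ e1 = a1 ∧ e2 = a2))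
    (heb : ¬(e0 = b0 ∧ e1 = b1 ∧ e2 = b2))
    (H1 : ∀ x y : ℝ, (x-a0)^2+(y-a1)^2+a2^2 ≤ (x-e0)^2+(y-e1)^2+e2^2 ∨
        (x-b0)^2+(y-b1)^2+b2^2 ≤ (x-e0)^2+(y-e1)^2+e2^2)
    (x0 y0 : ℝ)
    (H2a : (x0-e0)^2+(y0-e1)^2+e2^2 ≤ (x0-a0)^2+(y0-a1)^2+a2^2)
    (H2b : (x0-e0)^2+(y0-e1)^2+e2^2 ≤ (x0-b0)^2+(y0-b1)^2+b2^2) :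
    (e0 = a0 ∧ e1 = a1 ∧ e2 = -a2) ∨ (e0 = b0 ∧ e1 = b1 ∧ e2 = -b2) ∨
    (∃ β : ℝ, 0 < β ∧ β < 1 ∧ e0 = β*a0+(1-β)*b0 ∧ e1 = β*a1+(1-β)*b1 ∧
      (e0-c0)^2+(e1-c1)^2+e2^2 = (a0-c0)^2+(a1-c1)^2+a2^2) := by
  by_cases hA : e0 = a0 ∧ e1 = a1
  · obtain ⟨h0, h1⟩ := hA
    subst h0; subst h1
    left
    have hD : 0 < (e0-b0)^2 + (e1-b1)^2 := by
      rcases not_and_or.mp hab with h | h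
      · nlinarith [sq_nonneg (e1-b1), sq_pos_of_ne_zero (sub_ne_zero.mpr h)]
      · nlinarith [sq_nonneg (e0-b0), sq_pos_of_ne_zero (sub_ne_zero.mpr h)]
    have hle : a2^2 ≤ e2^2 := by
      by_contra hg
      push_neg at hg
      obtain ⟨x, y, hxy⟩ := exists_pos_affine (e0-b0) (e1-b1)
        (b0^2+b1^2+b2^2 - (e0^2+e1^2+e2^2)) hD
      rcases H1 x y with h | h
      · nlinarith
      · nlinarith
    have hge : e2^2 ≤ a2^2 := by nlinarith
    have hfac : (e2 - a2)*(e2 + a2) = 0 := by nlinarith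
    rcases mul_eq_zero.mp hfac with h | h
    · exact absurd ⟨rfl, rfl, by linarith⟩ hea
    · exact ⟨rfl, rfl, by linarith⟩
  · by_cases hB : e0 = b0 ∧ e1 = b1
    · obtain ⟨h0, h1⟩ := hB
      subst h0; subst h1
      right; left
      have hD : 0 < (e0-a0)^2 + (e1-a1)^2 := by
        rcases not_and_or.mp hab with h | h
        · nlinarith [sq_nonneg (e1-a1), sq_pos_of_ne_zero (sub_ne_zero.mpr (Ne.symm h))]
        · nlinarith [sq_nonneg (e0-a0), sq_pos_of_ne_zero (sub_ne_zero.mpr (Ne.symm h))]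
      have hle : b2^2 ≤ e2^2 := by
        by_contra hg
        push_neg at hg
        obtain ⟨x, y, hxy⟩ := exists_pos_affine (e0-a0) (e1-a1)
          (a0^2+a1^2+a2^2 - (e0^2+e1^2+e2^2)) hD
        rcases H1 x y with h | h
        · nlinarith
        · nlinarith
      have hge : e2^2 ≤ b2^2 := by nlinarith
      have hfac : (e2 - b2)*(e2 + b2) = 0 := by nlinarith
      rcases mul_eq_zero.mp hfac with h | h
      · exact absurd ⟨rfl, rfl, by linarith⟩ heb
      · exact ⟨rfl, rfl, by linarith⟩
    · right; right
      have hDA : 0 < (e0-a0)^2 + (e1-a1)^2 := by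
        rcases not_and_or.mp hA with h | h
        · nlinarith [sq_nonneg (e1-a1), sq_pos_of_ne_zero (sub_ne_zero.mpr h)]
        · nlinarith [sq_nonneg (e0-a0), sq_pos_of_ne_zero (sub_ne_zero.mpr h)]
      have hDB : 0 < (e0-b0)^2 + (e1-b1)^2 := by
        rcases not_and_or.mp hB with h | h
        · nlinarith [sq_nonneg (e1-b1), sq_pos_of_ne_zero (sub_ne_zero.mpr h)]
        · nlinarith [sq_nonneg (e0-b0), sq_pos_of_ne_zero (sub_ne_zero.mpr h)]
      have H1' : ∀ x y : ℝ,
          2*(e0-a0)*x+2*(e1-a1)*y+(a0^2+a1^2+a2^2 - (e0^2+e1^2+e2^2)) ≤ 0 ∨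
          2*(e0-b0)*x+2*(e1-b1)*y+(b0^2+b1^2+b2^2 - (e0^2+e1^2+e2^2)) ≤ 0 := by
        intro x y
        rcases H1 x y with h | h
        · left; linarith
        · right; linarith
      obtain ⟨L, hL, hu, hv, hg⟩ := halfplane (e0-a0) (e1-a1)
        (a0^2+a1^2+a2^2 - (e0^2+e1^2+e2^2)) (e0-b0) (e1-b1)
        (b0^2+b1^2+b2^2 - (e0^2+e1^2+e2^2)) x0 y0 hDA hDB H1'
        (by linarith) (by linarith)
      have h1L : (0:ℝ) < 1 + L := by linarith
      have h1L' : (1:ℝ) + L ≠ 0 := ne_of_gt h1L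
      refine ⟨L/(1+L), by positivity, by rw [div_lt_one h1L]; linarith, ?_, ?_, ?_⟩
      · field_simp
        linear_combination hu
      · field_simp
        linear_combination hv
      · have hscaled : (1+L)*((e0-c0)^2+(e1-c1)^2+e2^2) = (1+L)*((a0-c0)^2+(a1-c1)^2+a2^2) := by
          linear_combination -hg - 2*c0*hu - 2*c1*hv - hceq
        exact mul_left_cancel₀ h1L' hscaled

lemma bwd_arc_coord (a0 a1 a2 b0 b1 b2 c0 c1 e0 e1 e2 β : ℝ)
    (hβ0 : 0 < β) (hβ1 : β < 1)
    (hceq : (c0-a0)^2+(c1-a1)^2+a2^2 = (c0-b0)^2+(c1-b1)^2+b2^2)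
    (he0 : e0 = β*a0+(1-β)*b0) (he1 : e1 = β*a1+(1-β)*b1)
    (hE : (e0-c0)^2+(e1-c1)^2+e2^2 = (a0-c0)^2+(a1-c1)^2+a2^2)
    (x y : ℝ) :
    (x-a0)^2+(y-a1)^2+a2^2 ≤ (x-e0)^2+(y-e1)^2+e2^2 ∨
      (x-b0)^2+(y-b1)^2+b2^2 ≤ (x-e0)^2+(y-e1)^2+e2^2 := by
  have hS : β*(a0^2+a1^2+a2^2) + (1-β)*(b0^2+b1^2+b2^2) = e0^2+e1^2+e2^2 := by
    linear_combination (β-1)*hceq - hE - 2*c0*he0 - 2*c1*he1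
  have hcomb : (1-β)*((x-b0)^2+(y-b1)^2+b2^2 - ((x-e0)^2+(y-e1)^2+e2^2))
      + β*((x-a0)^2+(y-a1)^2+a2^2 - ((x-e0)^2+(y-e1)^2+e2^2)) = 0 := by
    linear_combination (2*x)*he0 + (2*y)*he1 + hS
  by_cases h : (x-a0)^2+(y-a1)^2+a2^2 ≤ (x-e0)^2+(y-e1)^2+e2^2
  · exact Or.inl h
  · push_neg at h
    right
    nlinarith [hcomb, mul_pos hβ0 (sub_pos.mpr h), hβ1]

lemma norm3 (x y : EuclideanSpace ℝ (Fin 3)) :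
    ‖x - y‖ = Real.sqrt ((x 0 - y 0)^2 + (x 1 - y 1)^2 + (x 2 - y 2)^2) := by
  rw [EuclideanSpace.norm_eq]
  congr 1
  simp [Fin.sum_univ_three]

lemma norm_le_iff3 (t p q : EuclideanSpace ℝ (Fin 3)) :
    ‖t - p‖ ≤ ‖t - q‖ ↔
      (t 0 - p 0)^2 + (t 1 - p 1)^2 + (t 2 - p 2)^2 ≤
        (t 0 - q 0)^2 + (t 1 - q 1)^2 + (t 2 - q 2)^2 := by
  rw [norm3, norm3]
  exact Real.sqrt_le_sqrt_iff (by positivity)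

lemma norm_eq_iff3 (x y z w : EuclideanSpace ℝ (Fin 3)) :
    ‖x - y‖ = ‖z - w‖ ↔
      (x 0 - y 0)^2 + (x 1 - y 1)^2 + (x 2 - y 2)^2 =
        (z 0 - w 0)^2 + (z 1 - w 1)^2 + (z 2 - w 2)^2 := by
  rw [norm3, norm3]
  exact Real.sqrt_inj (by positivity) (by positivity)

/-- Theorem 1 (barrier): for two active pursuers `a`, `b` (distinct horizontal projections),
with `c = c_{a,b}` the simultaneous-arrival point and `r = r_{a,b} = ‖a − c‖`, the barrier
is the union of the two mirror points and the circular arc of radius `r` centered at `c`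
in the vertical plane over the open segment joining the pursuers' projections. -/
theorem two_pursuer_barrier (a b c e : EuclideanSpace ℝ (Fin 3))
    (hab : (a 0, a 1) ≠ (b 0, b 1))
    (hcT : c 2 = 0)
    (hcline : ∃ u : ℝ, c = projT a + u • (projT b - projT a))
    (hceq : ‖c - a‖ = ‖c - b‖)
    (he : e 2 > 0) (hea : e ≠ a) (heb : e ≠ b) :
    ((∀ t : EuclideanSpace ℝ (Fin 3), t 2 = 0 → min ‖t - a‖ ‖t - b‖ ≤ ‖t - e‖) ∧
      (∃ t : EuclideanSpace ℝ (Fin 3), t 2 = 0 ∧ ‖t - e‖ ≤ min ‖t - a‖ ‖t - b‖)) ↔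
    ((e 0 = a 0 ∧ e 1 = a 1 ∧ e 2 = -(a 2)) ∨
      (e 0 = b 0 ∧ e 1 = b 1 ∧ e 2 = -(b 2)) ∨
      (∃ β : ℝ, 0 < β ∧ β < 1 ∧
        e 0 = β * a 0 + (1 - β) * b 0 ∧ e 1 = β * a 1 + (1 - β) * b 1 ∧
        ‖e - c‖ = ‖a - c‖)) := by
  have habC : ¬(a 0 = b 0 ∧ a 1 = b 1) := by
    rintro ⟨h1, h2⟩
    exact hab (by rw [h1, h2])
  have hceqC : (c 0 - a 0)^2+(c 1 - a 1)^2+(a 2)^2 = (c 0 - b 0)^2+(c 1 - b 1)^2+(b 2)^2 := by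
    have h := (norm_eq_iff3 c a c b).mp hceq
    rw [hcT] at h
    linear_combination h
  constructor
  · rintro ⟨H1, t, htT, ht⟩
    have heaC : ¬(e 0 = a 0 ∧ e 1 = a 1 ∧ e 2 = a 2) := by
      rintro ⟨h1, h2, h3⟩
      exact hea (by ext i; fin_cases i <;> assumption)
    have hebC : ¬(e 0 = b 0 ∧ e 1 = b 1 ∧ e 2 = b 2) := by
      rintro ⟨h1, h2, h3⟩
      exact heb (by ext i; fin_cases i <;> assumption)
    have H1C : ∀ x y : ℝ,
        (x - a 0)^2+(y - a 1)^2+(a 2)^2 ≤ (x - e 0)^2+(y - e 1)^2+(e 2)^2 ∨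
        (x - b 0)^2+(y - b 1)^2+(b 2)^2 ≤ (x - e 0)^2+(y - e 1)^2+(e 2)^2 := by
      intro x y
      have hm0 : (mk3 x y 0) 0 = x := by simp [mk3]
      have hm1 : (mk3 x y 0) 1 = y := by simp [mk3]
      have hm2 : (mk3 x y 0) 2 = 0 := by simp [mk3]
      rcases min_le_iff.mp (H1 (mk3 x y 0) hm2) with h | h
      · left
        have h' := (norm_le_iff3 _ _ _).mp h
        rw [hm0, hm1, hm2] at h'
        nlinarith [h']
      · right
        have h' := (norm_le_iff3 _ _ _).mp h
        rw [hm0, hm1, hm2] at h'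
        nlinarith [h']
    have H2aC : (t 0 - e 0)^2+(t 1 - e 1)^2+(e 2)^2 ≤ (t 0 - a 0)^2+(t 1 - a 1)^2+(a 2)^2 := by
      have h' := (norm_le_iff3 t e a).mp (le_trans ht (min_le_left _ _))
      rw [htT] at h'
      nlinarith [h']
    have H2bC : (t 0 - e 0)^2+(t 1 - e 1)^2+(e 2)^2 ≤ (t 0 - b 0)^2+(t 1 - b 1)^2+(b 2)^2 := by
      have h' := (norm_le_iff3 t e b).mp (le_trans ht (min_le_right _ _))
      rw [htT] at h'
      nlinarith [h']
    rcases fwd_coord (a 0) (a 1) (a 2) (b 0) (b 1) (b 2) (c 0) (c 1) (e 0) (e 1) (e 2)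
      habC hceqC heaC hebC H1C (t 0) (t 1) H2aC H2bC with h | h | ⟨β, hb0, hb1, h1, h2, h5⟩
    · exact Or.inl h
    · exact Or.inr (Or.inl h)
    · refine Or.inr (Or.inr ⟨β, hb0, hb1, h1, h2, ?_⟩)
      rw [norm_eq_iff3, hcT]
      linear_combination h5
  · rintro (⟨h1, h2, h3⟩ | ⟨h1, h2, h3⟩ | ⟨β, hb0, hb1, h1, h2, h5⟩)
    · constructor
      · intro t htT
        have hta : ‖t - a‖ = ‖t - e‖ := by
          rw [norm3, norm3, h1, h2, h3, htT]
          congr 1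
          ring
        exact le_trans (min_le_left _ _) (le_of_eq hta)
      · refine ⟨c, hcT, ?_⟩
        have hce : ‖c - e‖ = ‖c - a‖ := by
          rw [norm3, norm3, h1, h2, h3, hcT]
          congr 1
          ring
        rw [hce]
        exact le_min le_rfl (le_of_eq hceq)
    · constructor
      · intro t htT
        have htb : ‖t - b‖ = ‖t - e‖ := by
          rw [norm3, norm3, h1, h2, h3, htT]
          congr 1
          ring
        exact le_trans (min_le_right _ _) (le_of_eq htb)
      · refine ⟨c, hcT, ?_⟩
        have hce : ‖c - e‖ = ‖c - b‖ := by
          rw [norm3, norm3, h1, h2, h3, hcT]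
          congr 1
          ring
        rw [hce]
        exact le_min (le_of_eq hceq.symm) le_rfl
    · have h5C : (e 0 - c 0)^2+(e 1 - c 1)^2+(e 2)^2 = (a 0 - c 0)^2+(a 1 - c 1)^2+(a 2)^2 := by
        have h' := (norm_eq_iff3 e c a c).mp h5
        rw [hcT] at h'
        linear_combination h'
      constructor
      · intro t htT
        rcases bwd_arc_coord (a 0) (a 1) (a 2) (b 0) (b 1) (b 2) (c 0) (c 1) (e 0) (e 1) (e 2) β
          hb0 hb1 hceqC h1 h2 h5C (t 0) (t 1) with h | h
        · refine le_trans (min_le_left _ _) ((norm_le_iff3 t a e).mpr ?_)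
          rw [htT]
          nlinarith [h]
        · refine le_trans (min_le_right _ _) ((norm_le_iff3 t b e).mpr ?_)
          rw [htT]
          nlinarith [h]
      · refine ⟨c, hcT, le_min ?_ ?_⟩
        · refine (norm_le_iff3 c e a).mpr ?_
          rw [hcT]
          nlinarith [h5C]
        · refine (norm_le_iff3 c e b).mpr ?_
          rw [hcT]
          nlinarith [h5C, hceqC]
end
end

section
/- Let a, b ∈ ℝ³ with (a₁, a₂) ≠ (b₁, b₂), let c = c_{a,b} and r = r_{a,b}, and let e ∈ ℝ³ with e₃ > 0, e ≠ a, e ≠ b. Then (for every t ∈ T, min(‖t − a‖, ‖t − b‖) < ‖t − e‖) if and only if (there exists β ∈ [0, 1] with (e₁, e₂) = β(a₁, a₂) + (1 − β)(b₁, b₂) and ‖e − c‖ > r). (Theorem 1: the pursuer winning subspace of the two-active-pursuer game is the region of the vertical plane over the segment joining the pursuers' projections lying strictly outside the circle of radius r centered at c.) -/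
noncomputable section

namespace TwoPursuerAux

lemma sq3 (x : EuclideanSpace ℝ (Fin 3)) : ‖x‖^2 = (x 0)^2 + (x 1)^2 + (x 2)^2 := by
  rw [EuclideanSpace.norm_eq, Real.sq_sqrt (by positivity)]
  simp [Fin.sum_univ_three, sq_abs]

lemma hsub (x y : EuclideanSpace ℝ (Fin 3)) (i : Fin 3) : (x - y) i = x i - y i := rfl

lemma nlt (x y : EuclideanSpace ℝ (Fin 3)) : ‖x‖ < ‖y‖ ↔ ‖x‖^2 < ‖y‖^2 :=
  (pow_lt_pow_iff_left₀ (norm_nonneg _) (norm_nonneg _) two_ne_zero).symm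


lemma plane_iff (a0 a1 b0 b1 e0 e1 δ : ℝ) (hab : (a0, a1) ≠ (b0, b1)) :
    (∀ x0 x1 : ℝ, 0 < δ + 2*(x0*(a0-e0) + x1*(a1-e1)) ∨
        0 < δ + 2*(x0*(b0-e0) + x1*(b1-e1))) ↔
    (0 < δ ∧ ∃ β : ℝ, 0 ≤ β ∧ β ≤ 1 ∧ e0 = β*a0 + (1-β)*b0 ∧ e1 = β*a1 + (1-β)*b1) := by
  have hD : 0 < (b0-a0)^2 + (b1-a1)^2 := by
    rcases (show b0 - a0 ≠ 0 ∨ b1 - a1 ≠ 0 by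
      by_contra h; push_neg at h
      exact hab (by rw [Prod.mk.injEq]; constructor <;> linarith [h.1, h.2])) with h | h
    · positivity
    · positivity
  constructor
  · intro H
    have hδ : 0 < δ := by rcases H 0 0 with h | h <;> linarith
    refine ⟨hδ, ?_⟩
    by_cases hd : (a0-e0)*(b1-e1) - (a1-e1)*(b0-e0) = 0
    · -- e projects onto the line through (a0,a1), (b0,b1)
      have hwk : (a0-e0)*(b1-a1) = (a1-e1)*(b0-a0) := by linear_combination hd
      set v : ℝ := ((e0-a0)*(b0-a0) + (e1-a1)*(b1-a1))/((b0-a0)^2+(b1-a1)^2) with hvdef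
      have hv0 : e0 - a0 = v*(b0-a0) := by
        rw [hvdef, div_mul_eq_mul_div, eq_div_iff hD.ne']
        linear_combination (a1-b1)*hwk
      have hv1 : e1 - a1 = v*(b1-a1) := by
        rw [hvdef, div_mul_eq_mul_div, eq_div_iff hD.ne']
        linear_combination (b0-a0)*hwk
      have hw0 : a0 - e0 = -(v*(b0-a0)) := by linarith
      have hw1 : a1 - e1 = -(v*(b1-a1)) := by linarith
      have hz0 : b0 - e0 = (1-v)*(b0-a0) := by linear_combination -hv0
      have hz1 : b1 - e1 = (1-v)*(b1-a1) := by linear_combination -hv1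
      have hv01 : 0 ≤ v ∧ v ≤ 1 := by
        constructor
        · by_contra hv; push_neg at hv   -- v < 0
          set M : ℝ := δ/(2*(-v)*((b0-a0)^2+(b1-a1)^2)) with hMdef'
          have hden : (2*(-v)*((b0-a0)^2+(b1-a1)^2)) ≠ 0 :=
            ne_of_gt (mul_pos (mul_pos two_pos (by linarith)) hD)
          have hMdef : M*(2*(-v)*((b0-a0)^2+(b1-a1)^2)) = δ := by
            rw [hMdef', div_mul_cancel₀ _ hden]
          rcases H (-(M*(b0-a0))) (-(M*(b1-a1))) with h | h
          · rw [hw0, hw1] at h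
            have h0 : δ + 2*((-(M*(b0-a0)))*(-(v*(b0-a0))) + (-(M*(b1-a1)))*(-(v*(b1-a1)))) = 0 := by
              linear_combination -hMdef
            linarith
          · rw [hz0, hz1] at h
            have hXv : (-v)*(δ + 2*((-(M*(b0-a0)))*((1-v)*(b0-a0)) + (-(M*(b1-a1)))*((1-v)*(b1-a1)))) = -δ := by
              linear_combination (v-1)*hMdef
            nlinarith [mul_pos (by linarith : (0:ℝ) < -v) h]
        · by_contra hv; push_neg at hv   -- 1 < v
          set M : ℝ := δ/(2*(v-1)*((b0-a0)^2+(b1-a1)^2)) with hMdef'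
          have hden : (2*(v-1)*((b0-a0)^2+(b1-a1)^2)) ≠ 0 :=
            ne_of_gt (mul_pos (mul_pos two_pos (by linarith)) hD)
          have hMdef : M*(2*(v-1)*((b0-a0)^2+(b1-a1)^2)) = δ := by
            rw [hMdef', div_mul_cancel₀ _ hden]
          rcases H (M*(b0-a0)) (M*(b1-a1)) with h | h
          · rw [hw0, hw1] at h
            have hYv : (v-1)*(δ + 2*((M*(b0-a0))*(-(v*(b0-a0))) + (M*(b1-a1))*(-(v*(b1-a1))))) = -δ := by
              linear_combination (-v)*hMdef
            nlinarith [mul_pos (by linarith : (0:ℝ) < v-1) h]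
          · rw [hz0, hz1] at h
            have h0 : δ + 2*((M*(b0-a0))*((1-v)*(b0-a0)) + (M*(b1-a1))*((1-v)*(b1-a1))) = 0 := by
              linear_combination -hMdef
            linarith
      exact ⟨1-v, by linarith [hv01.2], by linarith [hv01.1],
        by linear_combination hv0, by linear_combination hv1⟩
    · exfalso
      have key1 : δ + 2*((δ/2*((a1-e1)-(b1-e1))/((a0-e0)*(b1-e1) - (a1-e1)*(b0-e0)))*(a0-e0)
          + (δ/2*((b0-e0)-(a0-e0))/((a0-e0)*(b1-e1) - (a1-e1)*(b0-e0)))*(a1-e1)) = 0 := by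
        generalize hDd : (a0-e0)*(b1-e1) - (a1-e1)*(b0-e0) = D at hd ⊢
        field_simp; subst hDd; ring
      have key2 : δ + 2*((δ/2*((a1-e1)-(b1-e1))/((a0-e0)*(b1-e1) - (a1-e1)*(b0-e0)))*(b0-e0)
          + (δ/2*((b0-e0)-(a0-e0))/((a0-e0)*(b1-e1) - (a1-e1)*(b0-e0)))*(b1-e1)) = 0 := by
        generalize hDd : (a0-e0)*(b1-e1) - (a1-e1)*(b0-e0) = D at hd ⊢
        field_simp; subst hDd; ring
      rcases H (δ/2*((a1-e1)-(b1-e1))/((a0-e0)*(b1-e1) - (a1-e1)*(b0-e0)))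
          (δ/2*((b0-e0)-(a0-e0))/((a0-e0)*(b1-e1) - (a1-e1)*(b0-e0))) with h | h
      · linarith
      · linarith
  · rintro ⟨hδ, β, hβ0, hβ1, he0, he1⟩ x0 x1
    rcases le_or_gt (x0*(b0-a0) + x1*(b1-a1)) 0 with h | h
    · left
      have key : x0*(a0-e0) + x1*(a1-e1) = (1-β)*(-(x0*(b0-a0) + x1*(b1-a1))) := by
        linear_combination (-x0)*he0 + (-x1)*he1
      nlinarith [mul_nonneg (by linarith : (0:ℝ) ≤ 1-β) (by linarith : 0 ≤ -(x0*(b0-a0) + x1*(b1-a1)))]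
    · right
      have key : x0*(b0-e0) + x1*(b1-e1) = β*(x0*(b0-a0) + x1*(b1-a1)) := by
        linear_combination (-x0)*he0 + (-x1)*he1
      nlinarith [mul_nonneg hβ0 h.le]

end TwoPursuerAux

/-- Theorem 1 (pursuer winning subspace): for two active pursuers the pursuer winning
subspace is the region of the vertical plane over the closed segment joining the pursuers'
projections lying strictly outside the circle of radius `r = ‖a − c‖` centered at
`c = c_{a,b}`. -/
theorem two_pursuer_winning (a b c e : EuclideanSpace ℝ (Fin 3))
    (hab : (a 0, a 1) ≠ (b 0, b 1))
    (hcT : c 2 = 0)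
    (hcline : ∃ u : ℝ, c = projT a + u • (projT b - projT a))
    (hceq : ‖c - a‖ = ‖c - b‖)
    (he : e 2 > 0) (hea : e ≠ a) (heb : e ≠ b) :
    (∀ t : EuclideanSpace ℝ (Fin 3), t 2 = 0 → min ‖t - a‖ ‖t - b‖ < ‖t - e‖) ↔
    (∃ β : ℝ, 0 ≤ β ∧ β ≤ 1 ∧
      e 0 = β * a 0 + (1 - β) * b 0 ∧ e 1 = β * a 1 + (1 - β) * b 1 ∧
      ‖e - c‖ > ‖a - c‖) := by
  classical
  open TwoPursuerAux in
  clear hcline he hea heb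
  have keyA : ∀ t : EuclideanSpace ℝ (Fin 3), t 2 = 0 → ‖t-e‖^2 - ‖t-a‖^2
      = (‖e-c‖^2 - ‖a-c‖^2) + 2*((t 0 - c 0)*(a 0 - e 0) + (t 1 - c 1)*(a 1 - e 1)) := by
    intro t ht
    simp only [sq3, hsub]
    rw [ht, hcT]; ring
  have hcc : ‖c - a‖^2 = ‖c - b‖^2 := by rw [hceq]
  have hcc' : (c 0 - a 0)^2 + (c 1 - a 1)^2 + (0 - a 2)^2
      = (c 0 - b 0)^2 + (c 1 - b 1)^2 + (0 - b 2)^2 := by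
    simp only [sq3, hsub] at hcc; rw [hcT] at hcc; exact hcc
  have keyB : ∀ t : EuclideanSpace ℝ (Fin 3), t 2 = 0 → ‖t-e‖^2 - ‖t-b‖^2
      = (‖e-c‖^2 - ‖a-c‖^2) + 2*((t 0 - c 0)*(b 0 - e 0) + (t 1 - c 1)*(b 1 - e 1)) := by
    intro t ht
    simp only [sq3, hsub]
    rw [ht, hcT]; linear_combination hcc'
  have hplane := plane_iff (a 0) (a 1) (b 0) (b 1) (e 0) (e 1)
    (‖e-c‖^2 - ‖a-c‖^2) hab
  constructor
  · intro hP
    have H : ∀ x0 x1 : ℝ, 0 < (‖e-c‖^2 - ‖a-c‖^2) + 2*(x0*(a 0 - e 0) + x1*(a 1 - e 1)) ∨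
        0 < (‖e-c‖^2 - ‖a-c‖^2) + 2*(x0*(b 0 - e 0) + x1*(b 1 - e 1)) := by
      intro x0 x1
      have ht2 : (mk3 (c 0 + x0) (c 1 + x1) 0) 2 = 0 := by simp [mk3]
      have ht0 : (mk3 (c 0 + x0) (c 1 + x1) 0) 0 = c 0 + x0 := by simp [mk3]
      have ht1 : (mk3 (c 0 + x0) (c 1 + x1) 0) 1 = c 1 + x1 := by simp [mk3]
      have hA := keyA _ ht2
      have hB := keyB _ ht2
      rw [ht0, ht1] at hA hB
      rcases min_lt_iff.mp (hP _ ht2) with h' | h'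
      · left
        have h'' := (nlt _ _).mp h'
        nlinarith [hA, h'']
      · right
        have h'' := (nlt _ _).mp h'
        nlinarith [hB, h'']
    obtain ⟨hδ, β, h0, h1, h2, h3⟩ := hplane.mp H
    exact ⟨β, h0, h1, h2, h3, (nlt _ _).mpr (by linarith)⟩
  · rintro ⟨β, h0, h1, h2, h3, h4⟩ t ht
    have hδ : 0 < ‖e-c‖^2 - ‖a-c‖^2 := by
      have := (nlt _ _).mp h4; linarith
    have hA := keyA t ht
    have hB := keyB t ht
    rcases hplane.mpr ⟨hδ, β, h0, h1, h2, h3⟩ (t 0 - c 0) (t 1 - c 1) with h | h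
    · exact min_lt_iff.mpr (Or.inl ((nlt _ _).mpr (by linarith [hA, h])))
    · exact min_lt_iff.mpr (Or.inr ((nlt _ _).mpr (by linarith [hB, h])))
end
end

section
/- Let a, b ∈ ℝ³ with (a₁, a₂) ≠ (b₁, b₂), let c = c_{a,b} and r = r_{a,b}, and let e ∈ ℝ³ with e₃ > 0, e ≠ a, e ≠ b. Then (there exists t ∈ T with ‖t − e‖ < min(‖t − a‖, ‖t − b‖)) if and only if (‖e − c‖ < r, or there is no β ∈ [0, 1] with (e₁, e₂) = β(a₁, a₂) + (1 − β)(b₁, b₂)). (Theorem 1: the evader winning subspace of the two-active-pursuer game is the complement in the play half-space of the barrier and pursuer winning subspace.) -/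
set_option maxHeartbeats 1000000

noncomputable section

private lemma core (a0 a1 A b0 b1 B c0 c1 e0 e1 E : ℝ)
    (hab : (a0, a1) ≠ (b0, b1))
    (hceq : (c0 - a0)^2 + (c1 - a1)^2 + A = (c0 - b0)^2 + (c1 - b1)^2 + B) :
    (∃ x y : ℝ,
      (x - e0)^2 + (y - e1)^2 + E < (x - a0)^2 + (y - a1)^2 + A ∧
      (x - e0)^2 + (y - e1)^2 + E < (x - b0)^2 + (y - b1)^2 + B) ↔
    ((e0 - c0)^2 + (e1 - c1)^2 + E < (a0 - c0)^2 + (a1 - c1)^2 + A ∨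
      ¬∃ β : ℝ, 0 ≤ β ∧ β ≤ 1 ∧ e0 = β * a0 + (1 - β) * b0 ∧ e1 = β * a1 + (1 - β) * b1) := by
  have hD : 0 < (a0 - b0)^2 + (a1 - b1)^2 := by
    have h : a0 ≠ b0 ∨ a1 ≠ b1 := by
      by_contra h; push_neg at h; exact hab (by rw [h.1, h.2])
    rcases h with h | h
    · have h' : a0 - b0 ≠ 0 := sub_ne_zero.mpr h
      have : 0 < (a0 - b0)^2 := by positivity
      nlinarith [sq_nonneg (a1 - b1)]
    · have h' : a1 - b1 ≠ 0 := sub_ne_zero.mpr h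
      have : 0 < (a1 - b1)^2 := by positivity
      nlinarith [sq_nonneg (a0 - b0)]
  have hD0 : (a0 - b0)^2 + (a1 - b1)^2 ≠ 0 := ne_of_gt hD
  by_cases hseg : ∃ β : ℝ, 0 ≤ β ∧ β ≤ 1 ∧ e0 = β * a0 + (1 - β) * b0 ∧ e1 = β * a1 + (1 - β) * b1
  · obtain ⟨s, hs0, hs1, he0, he1⟩ := hseg
    constructor
    · rintro ⟨x, y, h1, h2⟩
      left
      have key : (a0 - c0)^2 + (a1 - c1)^2 + A - ((e0 - c0)^2 + (e1 - c1)^2 + E)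
          = s * (((x - a0)^2 + (y - a1)^2 + A) - ((x - e0)^2 + (y - e1)^2 + E))
          + (1 - s) * (((x - b0)^2 + (y - b1)^2 + B) - ((x - e0)^2 + (y - e1)^2 + E)) := by
        subst he0 he1
        linear_combination (1 - s) * hceq
      rcases eq_or_lt_of_le hs0 with h0 | h0
      · nlinarith [key, h1, h2]
      · nlinarith [key, mul_pos h0 (sub_pos.mpr h1),
          mul_nonneg (by linarith : (0:ℝ) ≤ 1 - s) (sub_pos.mpr h2).le]
    · rintro (h | h)
      · obtain ⟨ν, hν2⟩ : ∃ ν : ℝ, 2 * ν * ((a0 - b0)^2 + (a1 - b1)^2)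
            = (a0^2 + a1^2 + A - e0^2 - e1^2 - E) - (b0^2 + b1^2 + B - e0^2 - e1^2 - E) :=
          ⟨((a0^2 + a1^2 + A - e0^2 - e1^2 - E) - (b0^2 + b1^2 + B - e0^2 - e1^2 - E))
            / (2 * ((a0 - b0)^2 + (a1 - b1)^2)), by field_simp⟩
        have hP : s * (a0^2 + a1^2 + A - e0^2 - e1^2 - E)
              + (1 - s) * (b0^2 + b1^2 + B - e0^2 - e1^2 - E)
            = (a0 - c0)^2 + (a1 - c1)^2 + A - ((e0 - c0)^2 + (e1 - c1)^2 + E) := by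
          subst he0 he1
          linear_combination (s - 1) * hceq
        refine ⟨ν * (a0 - b0), ν * (a1 - b1), ?_, ?_⟩
        · have g1 : ((ν * (a0-b0) - a0)^2 + (ν * (a1-b1) - a1)^2 + A)
              - ((ν * (a0-b0) - e0)^2 + (ν * (a1-b1) - e1)^2 + E)
              = s * (a0^2 + a1^2 + A - e0^2 - e1^2 - E)
                + (1 - s) * (b0^2 + b1^2 + B - e0^2 - e1^2 - E) := by
            subst he0 he1
            linear_combination (s - 1) * hν2
          linarith [g1, hP, h]
        · have g2 : ((ν * (a0-b0) - b0)^2 + (ν * (a1-b1) - b1)^2 + B)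
              - ((ν * (a0-b0) - e0)^2 + (ν * (a1-b1) - e1)^2 + E)
              = s * (a0^2 + a1^2 + A - e0^2 - e1^2 - E)
                + (1 - s) * (b0^2 + b1^2 + B - e0^2 - e1^2 - E) := by
            subst he0 he1
            linear_combination s * hν2
          linarith [g2, hP, h]
      · exact absurd ⟨s, hs0, hs1, he0, he1⟩ h
  · refine iff_of_true ?_ (Or.inr hseg)
    by_cases hdet : (a0 - e0) * (b1 - e1) - (a1 - e1) * (b0 - e0) = 0
    · -- parallel case
      have hpd : (a0 - e0) * (a1 - b1) - (a1 - e1) * (a0 - b0) = 0 := by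
        linear_combination - hdet
      obtain ⟨p, hp0, hp1⟩ : ∃ p : ℝ, a0 - e0 = p * (a0 - b0) ∧ a1 - e1 = p * (a1 - b1) := by
        refine ⟨((a0 - e0) * (a0 - b0) + (a1 - e1) * (a1 - b1)) / ((a0 - b0)^2 + (a1 - b1)^2),
          ?_, ?_⟩
        · field_simp; linear_combination (a1 - b1) * hpd
        · field_simp; linear_combination (-(a0 - b0)) * hpd
      have hq0 : b0 - e0 = (p - 1) * (a0 - b0) := by linear_combination hp0
      have hq1 : b1 - e1 = (p - 1) * (a1 - b1) := by linear_combination hp1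
      have hnot : p < 0 ∨ 1 < p := by
        by_contra hc; push_neg at hc
        exact hseg ⟨1 - p, by linarith [hc.1, hc.2], by linarith [hc.1, hc.2],
          by linear_combination - hp0, by linear_combination - hp1⟩
      have key : ∀ μ : ℝ,
          (((μ * (a0-b0) - a0)^2 + (μ * (a1-b1) - a1)^2 + A)
            - ((μ * (a0-b0) - e0)^2 + (μ * (a1-b1) - e1)^2 + E)
            = (a0^2 + a1^2 + A - e0^2 - e1^2 - E) - μ * (2 * p * ((a0 - b0)^2 + (a1 - b1)^2)))
          ∧ (((μ * (a0-b0) - b0)^2 + (μ * (a1-b1) - b1)^2 + B)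
            - ((μ * (a0-b0) - e0)^2 + (μ * (a1-b1) - e1)^2 + E)
            = (b0^2 + b1^2 + B - e0^2 - e1^2 - E)
              - μ * (2 * (p - 1) * ((a0 - b0)^2 + (a1 - b1)^2))) := by
        intro μ
        constructor
        · linear_combination (-(2 * μ * (a0 - b0))) * hp0 + (-(2 * μ * (a1 - b1))) * hp1
        · linear_combination (-(2 * μ * (a0 - b0))) * hq0 + (-(2 * μ * (a1 - b1))) * hq1
      rcases hnot with hplt | hpgt
      · have hpD : 2 * p * ((a0 - b0)^2 + (a1 - b1)^2) < 0 := by nlinarith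
        have hpD' : 2 * (p - 1) * ((a0 - b0)^2 + (a1 - b1)^2) < 0 := by nlinarith
        set μ := max ((a0^2 + a1^2 + A - e0^2 - e1^2 - E) / (2 * p * ((a0 - b0)^2 + (a1 - b1)^2)))
          ((b0^2 + b1^2 + B - e0^2 - e1^2 - E) / (2 * (p - 1) * ((a0 - b0)^2 + (a1 - b1)^2))) + 1
          with hμ
        have hμa : μ * (2 * p * ((a0 - b0)^2 + (a1 - b1)^2))
            < a0^2 + a1^2 + A - e0^2 - e1^2 - E := by
          refine (div_lt_iff_of_neg hpD).mp ?_
          rw [hμ]; exact lt_of_le_of_lt (le_max_left _ _) (lt_add_one _)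
        have hμb : μ * (2 * (p - 1) * ((a0 - b0)^2 + (a1 - b1)^2))
            < b0^2 + b1^2 + B - e0^2 - e1^2 - E := by
          refine (div_lt_iff_of_neg hpD').mp ?_
          rw [hμ]; exact lt_of_le_of_lt (le_max_right _ _) (lt_add_one _)
        exact ⟨μ * (a0 - b0), μ * (a1 - b1),
          by linarith [(key μ).1, hμa], by linarith [(key μ).2, hμb]⟩
      · have hpD : 0 < 2 * p * ((a0 - b0)^2 + (a1 - b1)^2) := by nlinarith
        have hpD' : 0 < 2 * (p - 1) * ((a0 - b0)^2 + (a1 - b1)^2) := by nlinarith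
        set μ := min ((a0^2 + a1^2 + A - e0^2 - e1^2 - E) / (2 * p * ((a0 - b0)^2 + (a1 - b1)^2)))
          ((b0^2 + b1^2 + B - e0^2 - e1^2 - E) / (2 * (p - 1) * ((a0 - b0)^2 + (a1 - b1)^2))) - 1
          with hμ
        have hμa : μ * (2 * p * ((a0 - b0)^2 + (a1 - b1)^2))
            < a0^2 + a1^2 + A - e0^2 - e1^2 - E := by
          refine (lt_div_iff₀ hpD).mp ?_
          rw [hμ]; exact lt_of_lt_of_le (sub_one_lt _) (min_le_left _ _)
        have hμb : μ * (2 * (p - 1) * ((a0 - b0)^2 + (a1 - b1)^2))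
            < b0^2 + b1^2 + B - e0^2 - e1^2 - E := by
          refine (lt_div_iff₀ hpD').mp ?_
          rw [hμ]; exact lt_of_lt_of_le (sub_one_lt _) (min_le_right _ _)
        exact ⟨μ * (a0 - b0), μ * (a1 - b1),
          by linarith [(key μ).1, hμa], by linarith [(key μ).2, hμb]⟩
    · -- independent case
      obtain ⟨x, y, h1lin, h2lin⟩ : ∃ x y : ℝ,
          2 * x * (a0 - e0) + 2 * y * (a1 - e1) = (a0^2 + a1^2 + A - e0^2 - e1^2 - E) - 1 ∧
          2 * x * (b0 - e0) + 2 * y * (b1 - e1) = (b0^2 + b1^2 + B - e0^2 - e1^2 - E) - 1 := by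
        refine ⟨(((a0^2 + a1^2 + A - e0^2 - e1^2 - E) - 1) * (b1 - e1)
            - ((b0^2 + b1^2 + B - e0^2 - e1^2 - E) - 1) * (a1 - e1))
            / (2 * ((a0 - e0) * (b1 - e1) - (a1 - e1) * (b0 - e0))),
          (((b0^2 + b1^2 + B - e0^2 - e1^2 - E) - 1) * (a0 - e0)
            - ((a0^2 + a1^2 + A - e0^2 - e1^2 - E) - 1) * (b0 - e0))
            / (2 * ((a0 - e0) * (b1 - e1) - (a1 - e1) * (b0 - e0))), ?_, ?_⟩
        · have hd := mul_inv_cancel₀ (mul_ne_zero (two_ne_zero (α := ℝ)) hdet)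
          rw [div_eq_mul_inv, div_eq_mul_inv]
          linear_combination ((a0^2 + a1^2 + A - e0^2 - e1^2 - E) - 1) * hd
        · have hd := mul_inv_cancel₀ (mul_ne_zero (two_ne_zero (α := ℝ)) hdet)
          rw [div_eq_mul_inv, div_eq_mul_inv]
          linear_combination ((b0^2 + b1^2 + B - e0^2 - e1^2 - E) - 1) * hd
      have g1 : ((x - a0)^2 + (y - a1)^2 + A) - ((x - e0)^2 + (y - e1)^2 + E)
          = (a0^2 + a1^2 + A - e0^2 - e1^2 - E)
            - (2 * x * (a0 - e0) + 2 * y * (a1 - e1)) := by ring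
      have g2 : ((x - b0)^2 + (y - b1)^2 + B) - ((x - e0)^2 + (y - e1)^2 + E)
          = (b0^2 + b1^2 + B - e0^2 - e1^2 - E)
            - (2 * x * (b0 - e0) + 2 * y * (b1 - e1)) := by ring
      exact ⟨x, y, by linarith [g1, h1lin], by linarith [g2, h2lin]⟩


lemma nsq (v : EuclideanSpace ℝ (Fin 3)) : ‖v‖^2 = (v 0)^2 + (v 1)^2 + (v 2)^2 := by
  rw [EuclideanSpace.norm_eq, Real.sq_sqrt (by positivity)]
  simp [Fin.sum_univ_three, Real.norm_eq_abs, sq_abs]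

lemma nlt (u v : EuclideanSpace ℝ (Fin 3)) :
    ‖u‖ < ‖v‖ ↔ (u 0)^2 + (u 1)^2 + (u 2)^2 < (v 0)^2 + (v 1)^2 + (v 2)^2 := by
  rw [← nsq, ← nsq]
  constructor
  · intro h; exact pow_lt_pow_left₀ h (norm_nonneg _) two_ne_zero
  · intro h; exact lt_of_pow_lt_pow_left₀ 2 (norm_nonneg _) h


/-- Theorem 1 (evader winning subspace): for two active pursuers the evader winning
subspace is the complement in the play half-space of the barrier and the pursuer winning
subspace: the evader wins iff it lies strictly inside the circle of radius `r = ‖a − c‖`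
centered at `c = c_{a,b}`, or its horizontal projection is not on the closed segment
joining the pursuers' projections. -/
theorem two_pursuer_evader_winning (a b c e : EuclideanSpace ℝ (Fin 3))
    (hab : (a 0, a 1) ≠ (b 0, b 1))
    (hcT : c 2 = 0)
    (hcline : ∃ u : ℝ, c = projT a + u • (projT b - projT a))
    (hceq : ‖c - a‖ = ‖c - b‖)
    (he : e 2 > 0) (hea : e ≠ a) (heb : e ≠ b) :
    (∃ t : EuclideanSpace ℝ (Fin 3), t 2 = 0 ∧ ‖t - e‖ < min ‖t - a‖ ‖t - b‖) ↔
    (‖e - c‖ < ‖a - c‖ ∨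
      ¬∃ β : ℝ, 0 ≤ β ∧ β ≤ 1 ∧
        e 0 = β * a 0 + (1 - β) * b 0 ∧ e 1 = β * a 1 + (1 - β) * b 1) := by
  obtain ⟨u, hu⟩ := hcline
  have hceq2 : (c 0 - a 0)^2 + (c 1 - a 1)^2 + (a 2)^2
      = (c 0 - b 0)^2 + (c 1 - b 1)^2 + (b 2)^2 := by
    have h2 : ‖c - a‖^2 = ‖c - b‖^2 := by rw [hceq]
    rw [nsq, nsq] at h2
    simp only [PiLp.sub_apply, hcT, zero_sub, neg_sq] at h2
    linear_combination h2
  have hL : (∃ t : EuclideanSpace ℝ (Fin 3), t 2 = 0 ∧ ‖t - e‖ < min ‖t - a‖ ‖t - b‖) ↔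
      (∃ x y : ℝ,
        (x - e 0)^2 + (y - e 1)^2 + (e 2)^2 < (x - a 0)^2 + (y - a 1)^2 + (a 2)^2 ∧
        (x - e 0)^2 + (y - e 1)^2 + (e 2)^2 < (x - b 0)^2 + (y - b 1)^2 + (b 2)^2) := by
    constructor
    · rintro ⟨t, ht2, hlt⟩
      rw [lt_min_iff] at hlt
      have h1 := (nlt _ _).mp hlt.1
      have h2 := (nlt _ _).mp hlt.2
      simp only [PiLp.sub_apply, ht2, zero_sub, neg_sq] at h1 h2
      exact ⟨t 0, t 1, by linear_combination h1, by linear_combination h2⟩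
    · rintro ⟨x, y, h1, h2⟩
      refine ⟨mk3 x y 0, rfl, ?_⟩
      rw [lt_min_iff]
      constructor
      · rw [nlt]
        simp only [PiLp.sub_apply, mk3, WithLp.equiv_symm_apply, PiLp.toLp_apply,
          Matrix.cons_val_zero, Matrix.cons_val_one, Matrix.head_cons,
          Matrix.cons_val_two, Matrix.tail_cons, zero_sub, neg_sq]
        linear_combination h1
      · rw [nlt]
        simp only [PiLp.sub_apply, mk3, WithLp.equiv_symm_apply, PiLp.toLp_apply,
          Matrix.cons_val_zero, Matrix.cons_val_one, Matrix.head_cons,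
          Matrix.cons_val_two, Matrix.tail_cons, zero_sub, neg_sq]
        linear_combination h2
  have hR : ‖e - c‖ < ‖a - c‖ ↔
      (e 0 - c 0)^2 + (e 1 - c 1)^2 + (e 2)^2 < (a 0 - c 0)^2 + (a 1 - c 1)^2 + (a 2)^2 := by
    rw [nlt]
    simp only [PiLp.sub_apply, hcT, sub_zero]
  exact hL.trans ((core (a 0) (a 1) ((a 2)^2) (b 0) (b 1) ((b 2)^2)
    (c 0) (c 1) (e 0) (e 1) ((e 2)^2) hab hceq2).trans (or_congr hR.symm Iff.rfl))
end
end

section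
/- Let a, b, q ∈ ℝ³ with (a₁, a₂) ≠ (b₁, b₂), and suppose q ∈ W_P^{a,b} or q̂ ∈ W_P^{a,b}, where q̂ = (q₁, q₂, −q₃). Then for every t ∈ T, min(‖t − a‖, ‖t − b‖) < ‖t − q‖. (Lemma 3, second case: if the third pursuer or its mirror across T lies in the pursuer winning subspace of the pair {a, b}, then the third pursuer reaches no point of the target plane before both of the others, so the barrier depends only on the pair.) -/
noncomputable section

/-- The mirror of a point across the target plane `T = {z | z₃ = 0}`. -/
def mirrorT (p : EuclideanSpace ℝ (Fin 3)) : EuclideanSpace ℝ (Fin 3) :=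
  mk3 (p 0) (p 1) (-(p 2))

/-- Membership in the pursuer winning subspace `W_P^{a,b}` of the pair `{a, b}`, given the
simultaneous-arrival point `c = c_{a,b}`. -/
def memWP (a b c z : EuclideanSpace ℝ (Fin 3)) : Prop :=
  z 2 > 0 ∧
  (∃ β : ℝ, 0 ≤ β ∧ β ≤ 1 ∧
    z 0 = β * a 0 + (1 - β) * b 0 ∧ z 1 = β * a 1 + (1 - β) * b 1) ∧
  ‖z - c‖ > ‖a - c‖

lemma normsq3 (x : EuclideanSpace ℝ (Fin 3)) : ‖x‖ ^ 2 = x 0 ^ 2 + x 1 ^ 2 + x 2 ^ 2 := by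
  rw [EuclideanSpace.norm_eq, Real.sq_sqrt (by positivity)]
  simp [Fin.sum_univ_three, sq_abs]

lemma mirror_apply (q : EuclideanSpace ℝ (Fin 3)) :
    mirrorT q 0 = q 0 ∧ mirrorT q 1 = q 1 ∧ mirrorT q 2 = -(q 2) := by
  refine ⟨?_, ?_, ?_⟩ <;> simp [mirrorT, mk3]

/-- Lemma 3 (second case): if the third pursuer `q` or its mirror across the target plane
lies in the pursuer winning subspace of the pair `{a, b}`, then `q` reaches no point of the
target plane strictly before both of the others. -/
theorem three_pursuer_pair_active (a b c q : EuclideanSpace ℝ (Fin 3))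
    (hab : (a 0, a 1) ≠ (b 0, b 1))
    (hcT : c 2 = 0)
    (hcline : ∃ u : ℝ, c = projT a + u • (projT b - projT a))
    (hceq : ‖c - a‖ = ‖c - b‖)
    (hq : memWP a b c q ∨ memWP a b c (mirrorT q)) :
    ∀ t : EuclideanSpace ℝ (Fin 3), t 2 = 0 → min ‖t - a‖ ‖t - b‖ < ‖t - q‖ := by
  intro t ht
  obtain ⟨hm0, hm1, hm2⟩ := mirror_apply q
  -- Extract the key data, valid for both `q` and its mirror.
  have key : ∃ β : ℝ, 0 ≤ β ∧ β ≤ 1 ∧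
      q 0 = β * a 0 + (1 - β) * b 0 ∧ q 1 = β * a 1 + (1 - β) * b 1 ∧
      (a 0 - c 0) ^ 2 + (a 1 - c 1) ^ 2 + (a 2) ^ 2
        < (q 0 - c 0) ^ 2 + (q 1 - c 1) ^ 2 + (q 2) ^ 2 := by
    rcases hq with ⟨_, ⟨β, hβ0, hβ1, h0, h1⟩, hn⟩ | ⟨_, ⟨β, hβ0, hβ1, h0, h1⟩, hn⟩ <;>
    · have hsq := pow_lt_pow_left₀ hn (norm_nonneg _) two_ne_zero
      rw [normsq3, normsq3] at hsq
      simp only [PiLp.sub_apply, hm0, hm1, hm2, hcT] at hsq h0 h1 ⊢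
      exact ⟨β, hβ0, hβ1, h0, h1, by nlinarith [hsq]⟩
  obtain ⟨β, hβ0, hβ1, h0, h1, H⟩ := key
  -- Squared version of the equidistance hypothesis.
  have hceq2 : (c 0 - a 0) ^ 2 + (c 1 - a 1) ^ 2 + (a 2) ^ 2
      = (c 0 - b 0) ^ 2 + (c 1 - b 1) ^ 2 + (b 2) ^ 2 := by
    have := congrArg (· ^ 2) hceq
    simp only [normsq3, PiLp.sub_apply, hcT] at this
    linarith [this]
  rw [h0, h1] at H
  rw [min_lt_iff]
  rcases le_total ((t 0 - c 0) * (b 0 - c 0) + (t 1 - c 1) * (b 1 - c 1))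
      ((t 0 - c 0) * (a 0 - c 0) + (t 1 - c 1) * (a 1 - c 1)) with hef | hef
  · left
    apply lt_of_pow_lt_pow_left₀ 2 (norm_nonneg _)
    rw [normsq3, normsq3]
    simp only [PiLp.sub_apply, ht, h0, h1]
    have hmul : 0 ≤ (1 - β) *
        (((t 0 - c 0) * (a 0 - c 0) + (t 1 - c 1) * (a 1 - c 1)) -
         ((t 0 - c 0) * (b 0 - c 0) + (t 1 - c 1) * (b 1 - c 1))) :=
      mul_nonneg (by linarith) (by linarith)
    have hid : ((t 0 - (β * a 0 + (1 - β) * b 0)) ^ 2 +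
          (t 1 - (β * a 1 + (1 - β) * b 1)) ^ 2 + (0 - q 2) ^ 2) -
        ((t 0 - a 0) ^ 2 + (t 1 - a 1) ^ 2 + (0 - a 2) ^ 2) =
        (((β * a 0 + (1 - β) * b 0 - c 0) ^ 2 + (β * a 1 + (1 - β) * b 1 - c 1) ^ 2 +
            q 2 ^ 2) -
          ((a 0 - c 0) ^ 2 + (a 1 - c 1) ^ 2 + a 2 ^ 2)) +
        2 * ((1 - β) *
          (((t 0 - c 0) * (a 0 - c 0) + (t 1 - c 1) * (a 1 - c 1)) -
           ((t 0 - c 0) * (b 0 - c 0) + (t 1 - c 1) * (b 1 - c 1)))) := by ring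
    linarith [hid, hmul, H]
  · right
    apply lt_of_pow_lt_pow_left₀ 2 (norm_nonneg _)
    rw [normsq3, normsq3]
    simp only [PiLp.sub_apply, ht, h0, h1]
    have hmul : 0 ≤ β *
        (((t 0 - c 0) * (b 0 - c 0) + (t 1 - c 1) * (b 1 - c 1)) -
         ((t 0 - c 0) * (a 0 - c 0) + (t 1 - c 1) * (a 1 - c 1))) :=
      mul_nonneg hβ0 (by linarith)
    have hid : ((t 0 - (β * a 0 + (1 - β) * b 0)) ^ 2 +
          (t 1 - (β * a 1 + (1 - β) * b 1)) ^ 2 + (0 - q 2) ^ 2) -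
        ((t 0 - b 0) ^ 2 + (t 1 - b 1) ^ 2 + (0 - b 2) ^ 2) =
        (((β * a 0 + (1 - β) * b 0 - c 0) ^ 2 + (β * a 1 + (1 - β) * b 1 - c 1) ^ 2 +
            q 2 ^ 2) -
          ((b 0 - c 0) ^ 2 + (b 1 - c 1) ^ 2 + b 2 ^ 2)) +
        2 * (β *
          (((t 0 - c 0) * (b 0 - c 0) + (t 1 - c 1) * (b 1 - c 1)) -
           ((t 0 - c 0) * (a 0 - c 0) + (t 1 - c 1) * (a 1 - c 1)))) := by ring
    linarith [hid, hmul, H, hceq2]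
end
end

section
/- Let p₁, p₂, p₃ ∈ ℝ³ be jointly active pursuers whose projections onto T are collinear, with the projection of p_i lying strictly between the projections of p_j and p_k ({i, j, k} = {1, 2, 3}), and let e ∈ ℝ³ with e₃ > 0, e ∉ {p₁, p₂, p₃}. Then (for every t ∈ T, min(‖t − p₁‖, ‖t − p₂‖, ‖t − p₃‖) < ‖t − e‖) if and only if (for every t ∈ T, min(‖t − p_i‖, ‖t − p_j‖) < ‖t − e‖) or (for every t ∈ T, min(‖t − p_i‖, ‖t − p_k‖) < ‖t − e‖). (Theorem 2: for three collinear-projection active pursuers, the pursuer winning subspace is the union of the pursuer winning subspaces of the two pairs containing the middle pursuer.) -/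
noncomputable section

/-- `c` is the simultaneous-arrival point `c_{a,b}`: the (unique) point of the target
plane on the line through the projections of `a` and `b` that is equidistant from
`a` and `b`. -/
def IsCab (a b c : EuclideanSpace ℝ (Fin 3)) : Prop :=
  c 2 = 0 ∧ (∃ u : ℝ, c = projT a + u • (projT b - projT a)) ∧ ‖c - a‖ = ‖c - b‖

/-- Three pursuers are jointly active: for every pair `i ≠ j` their horizontal projections
differ, and neither the remaining pursuer `p_k` nor its mirror across the target plane lies
in the pursuer winning subspace `W_P^{p_i,p_j}` of the pair. -/
def JointlyActive (p : Fin 3 → EuclideanSpace ℝ (Fin 3)) : Prop :=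
  ∀ i j k : Fin 3, i ≠ j → k ≠ i → k ≠ j →
    (p i 0, p i 1) ≠ (p j 0, p j 1) ∧
    ∀ c : EuclideanSpace ℝ (Fin 3), IsCab (p i) (p j) c →
      ¬memWP (p i) (p j) c (p k) ∧ ¬memWP (p i) (p j) c (mirrorT (p k))

lemma norm_sub3 (z w : EuclideanSpace ℝ (Fin 3)) :
    ‖z - w‖ = Real.sqrt ((z 0 - w 0)^2 + (z 1 - w 1)^2 + (z 2 - w 2)^2) := by
  rw [EuclideanSpace.norm_eq]
  congr 1
  simp [Fin.sum_univ_three, Real.norm_eq_abs, sq_abs]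

def fP (e0 e1 e2 a b c x y : ℝ) : ℝ :=
  (x - e0)^2 + (y - e1)^2 + e2^2 - ((x - a)^2 + (y - b)^2 + c^2)

lemma norm_lt_iff3_s13 (t q e : EuclideanSpace ℝ (Fin 3)) (ht : t 2 = 0) :
    ‖t - q‖ < ‖t - e‖ ↔ 0 < fP (e 0) (e 1) (e 2) (q 0) (q 1) (q 2) (t 0) (t 1) := by
  rw [norm_sub3, norm_sub3, Real.sqrt_lt_sqrt_iff (by positivity), ht]
  simp only [fP]
  constructor <;> intro h <;> nlinarith [h]

lemma core_s13 (e0 e1 e2 ai bi ci aj bj cj ak bk ck l : ℝ)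
    (hl0 : 0 < l)
    (hai : ai = (1 - l) * aj + l * ak) (hbi : bi = (1 - l) * bj + l * bk)
    (hD : 0 ≤ l * (1 - l) * ((ak - aj)^2 + (bk - bj)^2)
            + (1 - l) * cj^2 + l * ck^2 - ci^2)
    (H : ∀ x y : ℝ, 0 < fP e0 e1 e2 ai bi ci x y ∨ 0 < fP e0 e1 e2 aj bj cj x y ∨
          0 < fP e0 e1 e2 ak bk ck x y) :
    (∀ x y : ℝ, 0 < fP e0 e1 e2 ai bi ci x y ∨ 0 < fP e0 e1 e2 aj bj cj x y) ∨
    (∀ x y : ℝ, 0 < fP e0 e1 e2 ai bi ci x y ∨ 0 < fP e0 e1 e2 ak bk ck x y) := by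
  by_contra hcon
  push_neg at hcon
  obtain ⟨⟨xa, ya, hIa, hJa⟩, ⟨xb, yb, hIb, hKb⟩⟩ := hcon
  have hJb : 0 < fP e0 e1 e2 aj bj cj xb yb := by
    rcases H xb yb with h | h | h
    · linarith
    · exact h
    · linarith
  set r : ℝ := -(fP e0 e1 e2 aj bj cj xa ya) with hrdef
  set s : ℝ := fP e0 e1 e2 aj bj cj xb yb with hsdef
  have hr : 0 ≤ r := by simp only [hrdef]; linarith
  have hs : 0 < s := hJb
  have hrs : 0 < r + s := by linarith
  set τ : ℝ := r / (r + s) with hτdef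
  have hτ0 : 0 ≤ τ := div_nonneg hr hrs.le
  have hτ1 : τ ≤ 1 := by rw [hτdef, div_le_one hrs]; linarith
  set X : ℝ := (1 - τ) * xa + τ * xb with hX
  set Y : ℝ := (1 - τ) * ya + τ * yb with hY
  have haff : ∀ a b c : ℝ, fP e0 e1 e2 a b c X Y =
      (1 - τ) * fP e0 e1 e2 a b c xa ya + τ * fP e0 e1 e2 a b c xb yb := by
    intro a b c
    simp only [fP, hX, hY]; ring
  have hJstar : fP e0 e1 e2 aj bj cj X Y = 0 := by
    rw [haff]
    have h1 : fP e0 e1 e2 aj bj cj xa ya = -r := by rw [hrdef]; ring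
    rw [h1, ← hsdef, hτdef]
    field_simp
    ring
  have hIstar : fP e0 e1 e2 ai bi ci X Y ≤ 0 := by
    rw [haff]
    nlinarith [mul_nonneg (by linarith : (0:ℝ) ≤ 1 - τ)
        (by linarith : 0 ≤ -(fP e0 e1 e2 ai bi ci xa ya)),
      mul_nonneg hτ0 (by linarith : 0 ≤ -(fP e0 e1 e2 ai bi ci xb yb))]
  have hid : fP e0 e1 e2 ai bi ci X Y =
      (1 - l) * fP e0 e1 e2 aj bj cj X Y + l * fP e0 e1 e2 ak bk ck X Y +
      (l * (1 - l) * ((ak - aj)^2 + (bk - bj)^2) + (1 - l) * cj^2 + l * ck^2 - ci^2) := by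
    simp only [fP, hai, hbi]; ring
  have hKstar : l * fP e0 e1 e2 ak bk ck X Y ≤ 0 := by
    rw [hJstar] at hid; linarith
  rcases H X Y with h | h | h
  · linarith
  · linarith
  · nlinarith [mul_pos hl0 h]

set_option maxHeartbeats 1000000 in
/-- Theorem 2 (pursuer winning subspace): for three jointly active pursuers with collinear
projections, the middle pursuer being `p_i`, the pursuer winning subspace is the union of
the pursuer winning subspaces of the two pairs containing the middle pursuer. -/
theorem collinear_three_pursuer_winning (p : Fin 3 → EuclideanSpace ℝ (Fin 3))
    (hactive : JointlyActive p)
    (i j k : Fin 3) (hij : i ≠ j) (hjk : j ≠ k) (hik : i ≠ k)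
    (hcol : Collinear ℝ ({projT (p i), projT (p j), projT (p k)} :
      Set (EuclideanSpace ℝ (Fin 3))))
    (hbtw : Sbtw ℝ (projT (p j)) (projT (p i)) (projT (p k)))
    (e : EuclideanSpace ℝ (Fin 3)) (he : e 2 > 0) (hne : ∀ m, e ≠ p m) :
    (∀ t : EuclideanSpace ℝ (Fin 3), t 2 = 0 →
        min ‖t - p i‖ (min ‖t - p j‖ ‖t - p k‖) < ‖t - e‖) ↔
    ((∀ t : EuclideanSpace ℝ (Fin 3), t 2 = 0 → min ‖t - p i‖ ‖t - p j‖ < ‖t - e‖) ∨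
      (∀ t : EuclideanSpace ℝ (Fin 3), t 2 = 0 → min ‖t - p i‖ ‖t - p k‖ < ‖t - e‖)) := by
  constructor
  · intro h
    -- extract the betweenness ratio l
    obtain ⟨l, hl0, hl1, hlm⟩ :
        ∃ l : ℝ, 0 < l ∧ l < 1 ∧
          (∀ m : Fin 3, projT (p i) m = (1 - l) * projT (p j) m + l * projT (p k) m) := by
      have hw := hbtw.wbtw
      rw [← mem_segment_iff_wbtw] at hw
      obtain ⟨a, b, ha, hb, hab, hy⟩ := hw
      refine ⟨b, ?_, ?_, ?_⟩
      · rcases lt_or_eq_of_le hb with h' | h'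
        · exact h'
        · exfalso; apply hbtw.ne_left
          have ha1 : a = 1 := by rw [← h'] at hab; linarith
          rw [← hy, ← h', ha1, zero_smul, add_zero, one_smul]
      · by_contra h'
        push_neg at h'
        have hb1 : b = 1 := le_antisymm (by linarith) h'
        apply hbtw.ne_right
        rw [← hy, hb1]
        have ha0 : a = 0 := by linarith
        rw [ha0, one_smul, zero_smul, zero_add]
      · intro m
        have hcm := congrArg (fun v : EuclideanSpace ℝ (Fin 3) => v m) hy
        simp only [PiLp.add_apply, PiLp.smul_apply, smul_eq_mul] at hcm
        rw [← hcm]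
        have ha' : a = 1 - b := by linarith
        rw [ha']
    have hai : p i 0 = (1 - l) * p j 0 + l * p k 0 := hlm 0
    have hbi : p i 1 = (1 - l) * p j 1 + l * p k 1 := hlm 1
    -- activity of the pair (j,k)
    have hpair := hactive j k i hjk hij hik
    -- V > 0
    set V : ℝ := (p k 0 - p j 0)^2 + (p k 1 - p j 1)^2 with hVdef
    have hVpos : 0 < V := by
      have hne' : p j 0 ≠ p k 0 ∨ p j 1 ≠ p k 1 := by
        by_contra hcc
        push_neg at hcc
        exact hpair.1 (by rw [hcc.1, hcc.2])
      rcases hne' with h' | h'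
      · nlinarith [mul_self_pos.mpr (sub_ne_zero.mpr (Ne.symm h')), sq_nonneg (p k 1 - p j 1)]
      · nlinarith [mul_self_pos.mpr (sub_ne_zero.mpr (Ne.symm h')), sq_nonneg (p k 0 - p j 0)]
    -- the simultaneous arrival point c for the pair (j,k)
    set u : ℝ := (V + (p k 2)^2 - (p j 2)^2) / (2 * V) with hudef
    have hu : 2 * u * V = V + (p k 2)^2 - (p j 2)^2 := by
      rw [hudef]; field_simp
    set c : EuclideanSpace ℝ (Fin 3) :=
      mk3 (p j 0 + u * (p k 0 - p j 0)) (p j 1 + u * (p k 1 - p j 1)) 0 with hcdef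
    have hc0 : c 0 = p j 0 + u * (p k 0 - p j 0) := rfl
    have hc1 : c 1 = p j 1 + u * (p k 1 - p j 1) := rfl
    have hc2 : c 2 = 0 := rfl
    have hIsCab : IsCab (p j) (p k) c := by
      refine ⟨rfl, ⟨u, ?_⟩, ?_⟩
      · ext m
        fin_cases m <;>
          simp [hcdef, mk3, projT, PiLp.add_apply, PiLp.smul_apply, PiLp.sub_apply,
            smul_eq_mul] <;> ring
      · rw [norm_sub3, norm_sub3, hc0, hc1, hc2]
        congr 1
        linear_combination hu
    -- D ≥ 0
    have hul : l * (2 * u * V) = l * (V + (p k 2)^2 - (p j 2)^2) := by rw [hu]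
    have hD : 0 ≤ l * (1 - l) * V
            + (1 - l) * (p j 2)^2 + l * (p k 2)^2 - (p i 2)^2 := by
      rcases lt_trichotomy (p i 2) 0 with hci | hci | hci
      · -- use the mirror of p i
        have hmem := (hpair.2 c hIsCab).2
        have hm2 : mirrorT (p i) 2 = -(p i 2) := rfl
        have hm0 : mirrorT (p i) 0 = p i 0 := rfl
        have hm1 : mirrorT (p i) 1 = p i 1 := rfl
        have hle : ‖mirrorT (p i) - c‖ ≤ ‖p j - c‖ := by
          by_contra hgt
          push_neg at hgt
          exact hmem ⟨by rw [hm2]; linarith, ⟨1 - l, by linarith, by linarith,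
            by rw [hm0, hai]; ring, by rw [hm1, hbi]; ring⟩, hgt⟩
        rw [norm_sub3, norm_sub3] at hle
        have hsq := (Real.sqrt_le_sqrt_iff (by positivity)).1 hle
        rw [hm0, hm1, hm2, hc0, hc1, hc2, hai, hbi] at hsq
        have hsq' : (l - u)^2 * V + (p i 2)^2 ≤ u^2 * V + (p j 2)^2 := by
          rw [hVdef]; linarith [hsq]
        nlinarith [hsq', hul]
      · have h1 := mul_pos (mul_pos hl0 (by linarith : (0:ℝ) < 1 - l)) hVpos
        have h2 := mul_nonneg (by linarith : (0:ℝ) ≤ 1 - l) (sq_nonneg (p j 2))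
        have h3 := mul_nonneg hl0.le (sq_nonneg (p k 2))
        rw [hci]; nlinarith [h1, h2, h3]
      · have hmem := (hpair.2 c hIsCab).1
        have hle : ‖p i - c‖ ≤ ‖p j - c‖ := by
          by_contra hgt
          push_neg at hgt
          exact hmem ⟨hci, ⟨1 - l, by linarith, by linarith,
            by rw [hai]; ring, by rw [hbi]; ring⟩, hgt⟩
        rw [norm_sub3, norm_sub3] at hle
        have hsq := (Real.sqrt_le_sqrt_iff (by positivity)).1 hle
        rw [hc0, hc1, hc2, hai, hbi] at hsq
        have hsq' : (l - u)^2 * V + (p i 2)^2 ≤ u^2 * V + (p j 2)^2 := by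
          rw [hVdef]; linarith [hsq]
        nlinarith [hsq', hul]
    -- scalar hypothesis
    have H : ∀ x y : ℝ,
        0 < fP (e 0) (e 1) (e 2) (p i 0) (p i 1) (p i 2) x y ∨
        0 < fP (e 0) (e 1) (e 2) (p j 0) (p j 1) (p j 2) x y ∨
        0 < fP (e 0) (e 1) (e 2) (p k 0) (p k 1) (p k 2) x y := by
      intro x y
      have ht := h (mk3 x y 0) rfl
      rw [min_lt_iff, min_lt_iff] at ht
      rcases ht with h' | h' | h'
      · exact Or.inl ((norm_lt_iff3_s13 (mk3 x y 0) (p i) e rfl).1 h')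
      · exact Or.inr (Or.inl ((norm_lt_iff3_s13 (mk3 x y 0) (p j) e rfl).1 h'))
      · exact Or.inr (Or.inr ((norm_lt_iff3_s13 (mk3 x y 0) (p k) e rfl).1 h'))
    have hD' : 0 ≤ l * (1 - l) * ((p k 0 - p j 0)^2 + (p k 1 - p j 1)^2)
            + (1 - l) * (p j 2)^2 + l * (p k 2)^2 - (p i 2)^2 := by
      rw [hVdef] at hD; exact hD
    rcases core_s13 (e 0) (e 1) (e 2) (p i 0) (p i 1) (p i 2) (p j 0) (p j 1) (p j 2)
        (p k 0) (p k 1) (p k 2) l hl0 hai hbi hD' H with hres | hres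
    · left
      intro t ht
      rw [min_lt_iff]
      rcases hres (t 0) (t 1) with h' | h'
      · exact Or.inl ((norm_lt_iff3_s13 t (p i) e ht).2 h')
      · exact Or.inr ((norm_lt_iff3_s13 t (p j) e ht).2 h')
    · right
      intro t ht
      rw [min_lt_iff]
      rcases hres (t 0) (t 1) with h' | h'
      · exact Or.inl ((norm_lt_iff3_s13 t (p i) e ht).2 h')
      · exact Or.inr ((norm_lt_iff3_s13 t (p k) e ht).2 h')
  · rintro (h | h) t ht
    · exact lt_of_le_of_lt (min_le_min le_rfl (min_le_left _ _)) (h t ht)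
    · exact lt_of_le_of_lt (min_le_min le_rfl (min_le_right _ _)) (h t ht)
end
end

section
/- Let p₁, p₂, p₃ ∈ ℝ³ be jointly active pursuers whose projections onto T are collinear, with the projection of p_i lying strictly between the projections of p_j and p_k ({i, j, k} = {1, 2, 3}), and let e ∈ ℝ³ with e₃ > 0, e ∉ {p₁, p₂, p₃}. Then (there exists t ∈ T with ‖t − e‖ < min(‖t − p₁‖, ‖t − p₂‖, ‖t − p₃‖)) if and only if (there exists t ∈ T with ‖t − e‖ < min(‖t − p_i‖, ‖t − p_j‖)) and (there exists t' ∈ T with ‖t' − e‖ < min(‖t' − p_i‖, ‖t' − p_k‖)). (Theorem 2: for three collinear-projection active pursuers, the evader winning subspace is the intersection of the evader winning subspaces of the two pairs containing the middle pursuer.) -/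
noncomputable section

lemma norm3_sq (x : EuclideanSpace ℝ (Fin 3)) : ‖x‖^2 = (x 0)^2 + (x 1)^2 + (x 2)^2 := by
  rw [EuclideanSpace.norm_eq, Real.sq_sqrt (by positivity)]
  simp [Fin.sum_univ_three]

lemma norm3_lt_iff (x y : EuclideanSpace ℝ (Fin 3)) : ‖x‖ < ‖y‖ ↔ ‖x‖^2 < ‖y‖^2 := by
  constructor <;> intro h <;> nlinarith [norm_nonneg x, norm_nonneg y]

lemma norm3_eq_of_sq {x y : EuclideanSpace ℝ (Fin 3)} (h : ‖x‖^2 = ‖y‖^2) : ‖x‖ = ‖y‖ := by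
  have h1 := norm_nonneg x
  have h2 := norm_nonneg y
  nlinarith [sq_nonneg (‖x‖ - ‖y‖), sq_nonneg (‖x‖ + ‖y‖)]

lemma seg_lemma (s α α' β β' γ γ' δ : ℝ) (hs0 : 0 < s) (hs1 : s < 1)
    (hδ : 0 ≤ δ) (h1 : (1-s)*β + s*γ - α = δ) (h2 : (1-s)*β' + s*γ' - α' = δ)
    (hα : 0 < α) (hβ : 0 < β) (hα' : 0 < α') (hγ' : 0 < γ') :
    ∃ l : ℝ, 0 ≤ l ∧ l ≤ 1 ∧ 0 < (1-l)*α + l*α' ∧ 0 < (1-l)*β + l*β' ∧ 0 < (1-l)*γ + l*γ' := by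
  rcases lt_or_ge 0 γ with hγ | hγ
  · exact ⟨0, le_refl 0, zero_le_one, by linarith, by linarith, by linarith⟩
  rcases lt_or_ge 0 β' with hβ' | hβ'
  · exact ⟨1, zero_le_one, le_refl 1, by linarith, by linarith, by linarith⟩
  have hdC : γ - γ' < 0 := by linarith
  have hdB : 0 < β - β' := by linarith
  set lC := γ / (γ - γ') with hlCdef
  set lB := β / (β - β') with hlBdef
  have eC : lC * (γ - γ') = γ := div_mul_cancel₀ γ hdC.ne
  have eB : lB * (β - β') = β := div_mul_cancel₀ β hdB.ne'
  have hlC0 : 0 ≤ lC := div_nonneg_of_nonpos hγ hdC.le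
  have hlC1 : lC < 1 := by nlinarith
  have hlB0 : 0 < lB := div_pos hβ hdB
  have hlB1 : lB ≤ 1 := by nlinarith
  have hAlC : 0 < (1 - lC) * α + lC * α' := by nlinarith
  have key : (1-s)*((1-lC)*β + lC*β') + s*((1-lC)*γ + lC*γ') - ((1-lC)*α + lC*α') = δ := by
    linear_combination (1-lC)*h1 + lC*h2
  have hCzero : (1-lC)*γ + lC*γ' = 0 := by linarith [eC]
  have hBlC : 0 < (1-lC)*β + lC*β' := by nlinarith
  have hlClB : lC < lB := by nlinarith
  refine ⟨(lC + lB)/2, by linarith, by linarith, by nlinarith, by nlinarith, by nlinarith⟩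

set_option maxHeartbeats 1600000 in
/-- Theorem 2 (evader winning subspace). -/
theorem collinear_three_pursuer_evader_winning (p : Fin 3 → EuclideanSpace ℝ (Fin 3))
    (hactive : JointlyActive p)
    (i j k : Fin 3) (hij : i ≠ j) (hjk : j ≠ k) (hik : i ≠ k)
    (hcol : Collinear ℝ ({projT (p i), projT (p j), projT (p k)} :
      Set (EuclideanSpace ℝ (Fin 3))))
    (hbtw : Sbtw ℝ (projT (p j)) (projT (p i)) (projT (p k)))
    (e : EuclideanSpace ℝ (Fin 3)) (he : e 2 > 0) (hne : ∀ m, e ≠ p m) :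
    (∃ t : EuclideanSpace ℝ (Fin 3), t 2 = 0 ∧
        ‖t - e‖ < min ‖t - p i‖ (min ‖t - p j‖ ‖t - p k‖)) ↔
    ((∃ t : EuclideanSpace ℝ (Fin 3), t 2 = 0 ∧ ‖t - e‖ < min ‖t - p i‖ ‖t - p j‖) ∧
      (∃ t' : EuclideanSpace ℝ (Fin 3), t' 2 = 0 ∧ ‖t' - e‖ < min ‖t' - p i‖ ‖t' - p k‖)) := by
  constructor
  · rintro ⟨t, ht2, ht⟩
    rw [lt_min_iff, lt_min_iff] at ht
    exact ⟨⟨t, ht2, lt_min_iff.mpr ⟨ht.1, ht.2.1⟩⟩, ⟨t, ht2, lt_min_iff.mpr ⟨ht.1, ht.2.2⟩⟩⟩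
  rintro ⟨⟨t, ht2, ht⟩, ⟨t', ht2', ht'⟩⟩
  rw [lt_min_iff] at ht ht'
  -- extract betweenness parameter
  obtain ⟨s, ⟨hs0, hs1⟩, hEq⟩ := hbtw.mem_image_Ioo
  have hA0 : p i 0 = p j 0 + s * (p k 0 - p j 0) := by
    have h0 := congrArg (fun x => x 0) hEq
    simp [AffineMap.lineMap_apply, projT, mk3] at h0
    linarith
  have hA1 : p i 1 = p j 1 + s * (p k 1 - p j 1) := by
    have h1 := congrArg (fun x => x 1) hEq
    simp [AffineMap.lineMap_apply, projT, mk3] at h1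
    linarith
  -- activeness for the pair (j, k) with remaining pursuer i
  obtain ⟨hnejk, hWP⟩ := hactive j k i hjk hij hik
  -- horizontal distance between p j and p k
  have hD : 0 < (p j 0 - p k 0)^2 + (p j 1 - p k 1)^2 := by
    rcases (by
      by_contra h
      push_neg at h
      exact hnejk (by rw [h.1, h.2]) : p j 0 ≠ p k 0 ∨ p j 1 ≠ p k 1) with h | h
    · nlinarith [sq_nonneg (p j 1 - p k 1), sq_pos_of_ne_zero (sub_ne_zero.mpr h)]
    · nlinarith [sq_nonneg (p j 0 - p k 0), sq_pos_of_ne_zero (sub_ne_zero.mpr h)]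
  set u : ℝ := 1/2 + ((p k 2)^2 - (p j 2)^2)/(2*((p j 0 - p k 0)^2 + (p j 1 - p k 1)^2)) with hudef
  have hu : (2*u - 1) * ((p j 0 - p k 0)^2 + (p j 1 - p k 1)^2) = (p k 2)^2 - (p j 2)^2 := by
    rw [hudef]; field_simp; ring
  set cpt : EuclideanSpace ℝ (Fin 3) :=
    mk3 (p j 0 + u*(p k 0 - p j 0)) (p j 1 + u*(p k 1 - p j 1)) 0 with hcptdef
  have hcpt0 : cpt 0 = p j 0 + u*(p k 0 - p j 0) := rfl
  have hcpt1 : cpt 1 = p j 1 + u*(p k 1 - p j 1) := rfl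
  have hcpt2 : cpt 2 = 0 := rfl
  have hcab : IsCab (p j) (p k) cpt := by
    refine ⟨rfl, ⟨u, ?_⟩, norm3_eq_of_sq ?_⟩
    · ext m
      fin_cases m <;> simp [hcptdef, projT, mk3] <;> ring
    · rw [norm3_sq, norm3_sq]
      simp only [PiLp.sub_apply, hcpt0, hcpt1, hcpt2]
      linear_combination hu
  obtain ⟨hnot1, hnot2⟩ := hWP cpt hcab
  -- the key inequality
  have hu3 : s*((2*u - 1)*((p j 0 - p k 0)^2 + (p j 1 - p k 1)^2)) = s*((p k 2)^2 - (p j 2)^2) := by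
    rw [hu]
  have K : (p i 2)^2 ≤ (1-s)*(p j 2)^2 + s*(p k 2)^2
      + s*(1-s)*((p j 0 - p k 0)^2 + (p j 1 - p k 1)^2) := by
    rcases eq_or_ne (p i 2) 0 with h2 | h2
    · rw [h2]
      nlinarith [sq_nonneg (p j 2), sq_nonneg (p k 2), mul_pos (mul_pos hs0 (by linarith : (0:ℝ) < 1 - s)) hD]
    · -- choose z = p i or its mirror, with positive third coordinate
      have hz : ∃ z : EuclideanSpace ℝ (Fin 3), z 0 = p i 0 ∧ z 1 = p i 1 ∧ z 2 > 0 ∧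
          (z 2)^2 = (p i 2)^2 ∧ ¬memWP (p j) (p k) cpt z := by
        rcases lt_or_ge 0 (p i 2) with hpos | hneg
        · exact ⟨p i, rfl, rfl, hpos, rfl, hnot1⟩
        · refine ⟨mirrorT (p i), rfl, rfl, ?_, ?_, hnot2⟩
          · show 0 < -(p i 2)
            rcases hneg.lt_or_eq with h | h
            · linarith
            · exact absurd (by linarith : p i 2 = 0) h2
          · show (-(p i 2))^2 = (p i 2)^2; ring
      obtain ⟨z, hz0, hz1, hz2, hz22, hznot⟩ := hz
      have hle : ‖z - cpt‖ ≤ ‖p j - cpt‖ := by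
        by_contra hgt
        push_neg at hgt
        exact hznot ⟨hz2, ⟨1 - s, by linarith, by linarith,
          by rw [hz0, hA0]; ring, by rw [hz1, hA1]; ring⟩, hgt⟩
      have hsq : ‖z - cpt‖^2 ≤ ‖p j - cpt‖^2 := by
        nlinarith [norm_nonneg (z - cpt), norm_nonneg (p j - cpt)]
      rw [norm3_sq, norm3_sq] at hsq
      simp only [PiLp.sub_apply, hcpt0, hcpt1, hcpt2, hz0, hz1] at hsq
      rw [hA0, hA1] at hsq
      rw [sub_zero, hz22] at hsq
      linarith [hsq, hu3]
  -- set up the affine values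
  have hαpos : 0 < ‖t - p i‖^2 - ‖t - e‖^2 := by
    have := (norm3_lt_iff _ _).mp ht.1; linarith
  have hβpos : 0 < ‖t - p j‖^2 - ‖t - e‖^2 := by
    have := (norm3_lt_iff _ _).mp ht.2; linarith
  have hα'pos : 0 < ‖t' - p i‖^2 - ‖t' - e‖^2 := by
    have := (norm3_lt_iff _ _).mp ht'.1; linarith
  have hγ'pos : 0 < ‖t' - p k‖^2 - ‖t' - e‖^2 := by
    have := (norm3_lt_iff _ _).mp ht'.2; linarith
  set Δ : ℝ := (1-s)*(p j 2)^2 + s*(p k 2)^2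
      + s*(1-s)*((p j 0 - p k 0)^2 + (p j 1 - p k 1)^2) - (p i 2)^2 with hΔdef
  have hΔ0 : 0 ≤ Δ := by rw [hΔdef]; linarith
  have hid1 : (1-s)*(‖t - p j‖^2 - ‖t - e‖^2) + s*(‖t - p k‖^2 - ‖t - e‖^2)
      - (‖t - p i‖^2 - ‖t - e‖^2) = Δ := by
    simp only [norm3_sq, PiLp.sub_apply, hΔdef]
    rw [hA0, hA1, ht2]
    ring
  have hid2 : (1-s)*(‖t' - p j‖^2 - ‖t' - e‖^2) + s*(‖t' - p k‖^2 - ‖t' - e‖^2)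
      - (‖t' - p i‖^2 - ‖t' - e‖^2) = Δ := by
    simp only [norm3_sq, PiLp.sub_apply, hΔdef]
    rw [hA0, hA1, ht2']
    ring
  obtain ⟨l, hl0, hl1, hA, hB, hC⟩ := seg_lemma s _ _ _ _ _ _ Δ hs0 hs1 hΔ0 hid1 hid2
    hαpos hβpos hα'pos hγ'pos
  set tt : EuclideanSpace ℝ (Fin 3) :=
    mk3 ((1-l)*(t 0) + l*(t' 0)) ((1-l)*(t 1) + l*(t' 1)) 0 with httdef
  have htt0 : tt 0 = (1-l)*(t 0) + l*(t' 0) := rfl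
  have htt1 : tt 1 = (1-l)*(t 1) + l*(t' 1) := rfl
  have htt2 : tt 2 = 0 := rfl
  refine ⟨tt, rfl, ?_⟩
  rw [lt_min_iff, lt_min_iff]
  refine ⟨?_, ?_, ?_⟩
  · rw [norm3_lt_iff]
    have : ‖tt - p i‖^2 - ‖tt - e‖^2 = (1-l)*(‖t - p i‖^2 - ‖t - e‖^2)
        + l*(‖t' - p i‖^2 - ‖t' - e‖^2) := by
      simp only [norm3_sq, PiLp.sub_apply, htt0, htt1, htt2]
      rw [ht2, ht2']
      ring
    linarith
  · rw [norm3_lt_iff]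
    have : ‖tt - p j‖^2 - ‖tt - e‖^2 = (1-l)*(‖t - p j‖^2 - ‖t - e‖^2)
        + l*(‖t' - p j‖^2 - ‖t' - e‖^2) := by
      simp only [norm3_sq, PiLp.sub_apply, htt0, htt1, htt2]
      rw [ht2, ht2']
      ring
    linarith
  · rw [norm3_lt_iff]
    have : ‖tt - p k‖^2 - ‖tt - e‖^2 = (1-l)*(‖t - p k‖^2 - ‖t - e‖^2)
        + l*(‖t' - p k‖^2 - ‖t' - e‖^2) := by
      simp only [norm3_sq, PiLp.sub_apply, htt0, htt1, htt2]
      rw [ht2, ht2']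
      ring
    linarith
end
end

section
/- Let p₁, p₂, p₃ ∈ ℝ³ be jointly active pursuers whose projections p̄₁, p̄₂, p̄₃ onto T are not collinear, let c be the unique point of T with ‖c − p₁‖ = ‖c − p₂‖ = ‖c − p₃‖, let r = ‖p₁ − c‖, and let S be the convex hull of {p̄₁, p̄₂, p̄₃} in T. Let e ∈ ℝ³ with e₃ > 0, e ∉ {p₁, p₂, p₃}. Then (for every t ∈ T, min(‖t − p₁‖, ‖t − p₂‖, ‖t − p₃‖) < ‖t − e‖) if and only if (‖e − c‖ > r and (e₁, e₂, 0) ∈ S). (Theorem 3: the pursuer winning subspace for three noncollinear-projection active pursuers is the region over the triangle S lying strictly outside the sphere of radius r centered at c.) -/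
noncomputable section

open RealInnerProductSpace

section Aux

lemma inner3 (a b : EuclideanSpace ℝ (Fin 3)) :
    ⟪a, b⟫ = a 0 * b 0 + a 1 * b 1 + a 2 * b 2 := by
  simp [PiLp.inner_apply, Fin.sum_univ_three, RCLike.inner_apply]
  ring

lemma key (t q e c : EuclideanSpace ℝ (Fin 3)) :
    ‖t - q‖ < ‖t - e‖ ↔ 2 * ⟪t - c, e - q⟫ < ‖e - c‖ ^ 2 - ‖q - c‖ ^ 2 := by
  have h1 : ‖t - q‖ < ‖t - e‖ ↔ ‖t - q‖ ^ 2 < ‖t - e‖ ^ 2 :=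
    (pow_lt_pow_iff_left₀ (norm_nonneg _) (norm_nonneg _) two_ne_zero).symm
  have e1 : t - q = (t - c) - (q - c) := by abel
  have e2 : t - e = (t - c) - (e - c) := by abel
  have e3 : ⟪t - c, e - q⟫ = ⟪t - c, e - c⟫ - ⟪t - c, q - c⟫ := by
    rw [← inner_sub_right]; congr 1; abel
  have A : ‖(t - c) - (q - c)‖ ^ 2 = ‖t - c‖ ^ 2 - 2 * ⟪t - c, q - c⟫ + ‖q - c‖ ^ 2 :=
    norm_sub_sq_real _ _
  have B : ‖(t - c) - (e - c)‖ ^ 2 = ‖t - c‖ ^ 2 - 2 * ⟪t - c, e - c⟫ + ‖e - c‖ ^ 2 :=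
    norm_sub_sq_real _ _
  rw [h1, e1, e2, A, B]
  constructor <;> intro h <;> linarith [e3]

lemma inner_plane (w y z : EuclideanSpace ℝ (Fin 3)) (hw : w 2 = 0) :
    ⟪w, y - z⟫ = ⟪w, projT y - projT z⟫ := by
  have h0 : (projT y - projT z) 0 = y 0 - z 0 := rfl
  have h1 : (projT y - projT z) 1 = y 1 - z 1 := rfl
  have h2 : (projT y - projT z) 2 = 0 := by show (0 : ℝ) - 0 = 0; ring
  rw [inner3, inner3, h0, h1, h2, hw]
  show w 0 * (y 0 - z 0) + w 1 * (y 1 - z 1) + 0 * (y 2 - z 2) = _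
  ring

theorem aux_main (p : Fin 3 → EuclideanSpace ℝ (Fin 3))
    (c : EuclideanSpace ℝ (Fin 3)) (hcT : c 2 = 0)
    (hc1 : ‖c - p 0‖ = ‖c - p 1‖) (hc2 : ‖c - p 1‖ = ‖c - p 2‖)
    (e : EuclideanSpace ℝ (Fin 3)) :
    (∀ t : EuclideanSpace ℝ (Fin 3), t 2 = 0 →
        min ‖t - p 0‖ (min ‖t - p 1‖ ‖t - p 2‖) < ‖t - e‖) ↔
    (‖e - c‖ > ‖p 0 - c‖ ∧
      projT e ∈ convexHull ℝ ({projT (p 0), projT (p 1), projT (p 2)} :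
        Set (EuclideanSpace ℝ (Fin 3)))) := by
  have hr : ∀ i : Fin 3, ‖p i - c‖ = ‖p 0 - c‖ := by
    intro i
    fin_cases i
    · rfl
    · show ‖p 1 - c‖ = ‖p 0 - c‖
      rw [norm_sub_rev, norm_sub_rev (p 0), ← hc1]
    · show ‖p 2 - c‖ = ‖p 0 - c‖
      rw [norm_sub_rev, norm_sub_rev (p 0), ← hc2, ← hc1]
  set S : Set (EuclideanSpace ℝ (Fin 3)) := {projT (p 0), projT (p 1), projT (p 2)} with hS
  constructor
  · intro h
    have h0 := h c hcT
    rw [← hc2, ← hc1, min_self, min_self] at h0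
    have hD : ‖e - c‖ > ‖p 0 - c‖ := by
      rw [norm_sub_rev e, norm_sub_rev (p 0)]; exact h0
    refine ⟨hD, ?_⟩
    by_contra hns
    -- separate
    have hfin : S.Finite := by
      simp only [hS]
      exact (Set.finite_singleton _).insert _ |>.insert _
    have hclosed : IsClosed (convexHull ℝ S) := (hfin.isCompact_convexHull (𝕜 := ℝ)).isClosed
    obtain ⟨f, u, hfs, hfe⟩ :=
      geometric_hahn_banach_closed_point (convex_convexHull ℝ S) hclosed hns
    set v := (InnerProductSpace.toDual ℝ (EuclideanSpace ℝ (Fin 3))).symm f with hv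
    have hvf : ∀ x, ⟪v, x⟫ = f x := fun x => InnerProductSpace.toDual_symm_apply
    obtain ⟨ε, hεpos, hgap⟩ :
        ∃ ε : ℝ, 0 < ε ∧ ∀ i : Fin 3, ε < ⟪v, projT e - projT (p i)⟫ := by
      refine ⟨f (projT e) - u, by linarith, ?_⟩
      intro i
      have hmem : projT (p i) ∈ S := by
        fin_cases i
        · exact Set.mem_insert _ _
        · exact Set.mem_insert_of_mem _ (Set.mem_insert _ _)
        · exact Set.mem_insert_of_mem _ (Set.mem_insert_of_mem _ rfl)
      have := hfs _ (subset_convexHull ℝ S hmem)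
      rw [inner_sub_right, hvf, hvf]
      linarith
    have hDpos : 0 < ‖e - c‖ ^ 2 - ‖p 0 - c‖ ^ 2 := by
      have := pow_lt_pow_left₀ hD (norm_nonneg _) two_ne_zero
      linarith
    obtain ⟨s, hspos, hsbig⟩ :
        ∃ s : ℝ, 0 < s ∧ ‖e - c‖ ^ 2 - ‖p 0 - c‖ ^ 2 < 2 * (s * ε) := by
      refine ⟨(‖e - c‖ ^ 2 - ‖p 0 - c‖ ^ 2) / (2 * ε) + 1, by positivity, ?_⟩
      have hmul : ((‖e - c‖ ^ 2 - ‖p 0 - c‖ ^ 2) / (2 * ε) + 1) * ε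
          = (‖e - c‖ ^ 2 - ‖p 0 - c‖ ^ 2) / 2 + ε := by
        field_simp
      linarith [hmul]
    set t : EuclideanSpace ℝ (Fin 3) := c + s • projT v with htdef
    have htT : t 2 = 0 := by
      show c 2 + s * (projT v) 2 = 0
      show c 2 + s * (0 : ℝ) = 0
      rw [hcT]; ring
    have htc : t - c = s • projT v := by simp [htdef]
    have hproj : ∀ i : Fin 3, ⟪projT v, e - p i⟫ = ⟪v, projT e - projT (p i)⟫ := by
      intro i
      have hw2 : (projT e - projT (p i)) 2 = 0 := by show (0 : ℝ) - 0 = 0; ring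
      rw [inner_plane (projT v) e (p i) rfl, inner3, inner3, hw2]
      show v 0 * _ + v 1 * _ + 0 * 0 = v 0 * _ + v 1 * _ + v 2 * 0
      ring
    have ht := h t htT
    rw [min_lt_iff, min_lt_iff] at ht
    have hcontr : ∀ i : Fin 3, ‖t - p i‖ < ‖t - e‖ → False := by
      intro i hi
      rw [key t (p i) e c, hr i, htc, inner_smul_left] at hi
      rw [hproj i] at hi
      have h2 : s * ε < s * ⟪v, projT e - projT (p i)⟫ :=
        (mul_lt_mul_iff_right₀ hspos).2 (hgap i)
      simp only [RCLike.star_def, starRingEnd_apply, star_trivial] at hi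
      linarith [hi, h2, hsbig]
    rcases ht with h1 | h2 | h3
    · exact hcontr 0 h1
    · exact hcontr 1 h2
    · exact hcontr 2 h3
  · rintro ⟨hD, hhull⟩ t ht
    have hDpos : 0 < ‖e - c‖ ^ 2 - ‖p 0 - c‖ ^ 2 := by
      have := pow_lt_pow_left₀ hD (norm_nonneg _) two_ne_zero
      linarith
    have hwT : (t - c) 2 = 0 := by show t 2 - c 2 = 0; rw [ht, hcT]; ring
    have hex : ∃ i : Fin 3, ⟪t - c, projT e - projT (p i)⟫ ≤ 0 := by
      by_contra hcon
      push_neg at hcon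
      have hlin : IsLinearMap ℝ (fun y : EuclideanSpace ℝ (Fin 3) => ⟪t - c, y⟫) :=
        ⟨fun a b => inner_add_right _ _ _, fun r x => real_inner_smul_right _ _ _⟩
      have hsub : S ⊆ {y | ⟪t - c, y⟫ < ⟪t - c, projT e⟫} := by
        intro y hy
        simp only [hS, Set.mem_insert_iff, Set.mem_singleton_iff] at hy
        have key2 : ∀ i : Fin 3, y = projT (p i) → ⟪t - c, y⟫ < ⟪t - c, projT e⟫ := by
          intro i hyi
          have := hcon i
          rw [inner_sub_right] at this
          rw [hyi]
          linarith
        rcases hy with h' | h' | h'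
        · exact key2 0 h'
        · exact key2 1 h'
        · exact key2 2 h'
      have h5 : ⟪t - c, projT e⟫ < ⟪t - c, projT e⟫ :=
        convexHull_min hsub (convex_halfSpace_lt hlin _) hhull
      exact lt_irrefl _ h5
    obtain ⟨i, hi⟩ := hex
    have hkey : ‖t - p i‖ < ‖t - e‖ := by
      rw [key t (p i) e c, hr i]
      rw [inner_plane (t - c) e (p i) hwT]
      linarith
    have : min ‖t - p 0‖ (min ‖t - p 1‖ ‖t - p 2‖) ≤ ‖t - p i‖ := by
      fin_cases i
      · exact min_le_left _ _
      · exact le_trans (min_le_right _ _) (min_le_left _ _)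
      · exact le_trans (min_le_right _ _) (min_le_right _ _)
    exact lt_of_le_of_lt this hkey

end Aux

/-- Theorem 3 (pursuer winning subspace): for three jointly active pursuers with
noncollinear projections, the pursuer winning subspace is the region over the triangle `S`
spanned by the projections lying strictly outside the sphere of radius `r = ‖p₁ − c‖`
centered at the equidistant point `c`. -/
theorem noncollinear_three_pursuer_winning (p : Fin 3 → EuclideanSpace ℝ (Fin 3))
    (hactive : JointlyActive p)
    (hncol : ¬Collinear ℝ ({projT (p 0), projT (p 1), projT (p 2)} :
      Set (EuclideanSpace ℝ (Fin 3))))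
    (c : EuclideanSpace ℝ (Fin 3)) (hcT : c 2 = 0)
    (hc1 : ‖c - p 0‖ = ‖c - p 1‖) (hc2 : ‖c - p 1‖ = ‖c - p 2‖)
    (e : EuclideanSpace ℝ (Fin 3)) (he : e 2 > 0) (hne : ∀ m, e ≠ p m) :
    (∀ t : EuclideanSpace ℝ (Fin 3), t 2 = 0 →
        min ‖t - p 0‖ (min ‖t - p 1‖ ‖t - p 2‖) < ‖t - e‖) ↔
    (‖e - c‖ > ‖p 0 - c‖ ∧
      projT e ∈ convexHull ℝ ({projT (p 0), projT (p 1), projT (p 2)} :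
        Set (EuclideanSpace ℝ (Fin 3)))) := by
  exact aux_main p c hcT hc1 hc2 e
end
end

section
/- Let p₁, p₂, p₃ ∈ ℝ³ be jointly active pursuers whose projections p̄₁, p̄₂, p̄₃ onto T are not collinear, let c be the unique point of T with ‖c − p₁‖ = ‖c − p₂‖ = ‖c − p₃‖, let r = ‖p₁ − c‖, and let S be the convex hull of {p̄₁, p̄₂, p̄₃} in T. Let e ∈ ℝ³ with e₃ > 0, e ∉ {p₁, p₂, p₃}. Then (there exists t ∈ T with ‖t − e‖ < min(‖t − p₁‖, ‖t − p₂‖, ‖t − p₃‖)) if and only if (‖e − c‖ < r or (e₁, e₂, 0) ∉ S). (Theorem 3: the evader winning subspace for three noncollinear-projection active pursuers is the complement in the play half-space of the barrier and the pursuer winning subspace.) -/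
noncomputable section

/- ### Auxiliary coordinate lemmas -/

private lemma E3.add_apply (a b : EuclideanSpace ℝ (Fin 3)) (i : Fin 3) :
    (a + b) i = a i + b i := rfl

private lemma E3.sub_apply (a b : EuclideanSpace ℝ (Fin 3)) (i : Fin 3) :
    (a - b) i = a i - b i := rfl

private lemma E3.smul_apply (r : ℝ) (a : EuclideanSpace ℝ (Fin 3)) (i : Fin 3) :
    (r • a) i = r * a i := rfl

private lemma projT_apply0 (q : EuclideanSpace ℝ (Fin 3)) : projT q 0 = q 0 := rfl
private lemma projT_apply1 (q : EuclideanSpace ℝ (Fin 3)) : projT q 1 = q 1 := rfl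
private lemma projT_apply2 (q : EuclideanSpace ℝ (Fin 3)) : projT q 2 = 0 := rfl

private lemma norm_sq3 (a : EuclideanSpace ℝ (Fin 3)) :
    ‖a‖ ^ 2 = (a 0) ^ 2 + (a 1) ^ 2 + (a 2) ^ 2 := by
  rw [EuclideanSpace.norm_eq, Real.sq_sqrt (by positivity)]
  simp [Fin.sum_univ_three, Real.norm_eq_abs, sq_abs]

private lemma norm_lt3 (a b : EuclideanSpace ℝ (Fin 3)) :
    ‖a‖ < ‖b‖ ↔ (a 0) ^ 2 + (a 1) ^ 2 + (a 2) ^ 2 < (b 0) ^ 2 + (b 1) ^ 2 + (b 2) ^ 2 := by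
  rw [EuclideanSpace.norm_eq, EuclideanSpace.norm_eq, Real.sqrt_lt_sqrt_iff (by positivity)]
  simp [Fin.sum_univ_three, Real.norm_eq_abs, sq_abs]

private lemma mk3_ext (x y : ℝ) :
    mk3 x y 0 = x • mk3 1 0 0 + y • mk3 0 1 0 := by
  apply (WithLp.equiv 2 (Fin 3 → ℝ)).injective
  funext i
  fin_cases i <;>
    simp [mk3, E3.add_apply, E3.smul_apply]

set_option maxHeartbeats 1000000 in
/-- Theorem 3 (evader winning subspace): for three jointly active pursuers with
noncollinear projections, the evader winning subspace is the complement in the play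
half-space of the barrier and the pursuer winning subspace: the evader wins iff it lies
strictly inside the sphere of radius `r = ‖p₁ − c‖` centered at the equidistant point `c`,
or its projection lies outside the triangle `S` spanned by the pursuers' projections. -/
theorem noncollinear_three_pursuer_evader_winning (p : Fin 3 → EuclideanSpace ℝ (Fin 3))
    (hactive : JointlyActive p)
    (hncol : ¬Collinear ℝ ({projT (p 0), projT (p 1), projT (p 2)} :
      Set (EuclideanSpace ℝ (Fin 3))))
    (c : EuclideanSpace ℝ (Fin 3)) (hcT : c 2 = 0)
    (hc1 : ‖c - p 0‖ = ‖c - p 1‖) (hc2 : ‖c - p 1‖ = ‖c - p 2‖)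
    (e : EuclideanSpace ℝ (Fin 3)) (he : e 2 > 0) (hne : ∀ m, e ≠ p m) :
    (∃ t : EuclideanSpace ℝ (Fin 3), t 2 = 0 ∧
        ‖t - e‖ < min ‖t - p 0‖ (min ‖t - p 1‖ ‖t - p 2‖)) ↔
    (‖e - c‖ < ‖p 0 - c‖ ∨
      projT e ∉ convexHull ℝ ({projT (p 0), projT (p 1), projT (p 2)} :
        Set (EuclideanSpace ℝ (Fin 3)))) := by
  -- squared-radius equalities
  have hr01 : (c 0 - p 0 0) ^ 2 + (c 1 - p 0 1) ^ 2 + (0 - p 0 2) ^ 2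
      = (c 0 - p 1 0) ^ 2 + (c 1 - p 1 1) ^ 2 + (0 - p 1 2) ^ 2 := by
    have h := congrArg (fun r : ℝ => r ^ 2) hc1
    simp only [norm_sq3, E3.sub_apply] at h
    rw [hcT] at h
    exact h
  have hr12 : (c 0 - p 1 0) ^ 2 + (c 1 - p 1 1) ^ 2 + (0 - p 1 2) ^ 2
      = (c 0 - p 2 0) ^ 2 + (c 1 - p 2 1) ^ 2 + (0 - p 2 2) ^ 2 := by
    have h := congrArg (fun r : ℝ => r ^ 2) hc2
    simp only [norm_sq3, E3.sub_apply] at h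
    rw [hcT] at h
    exact h
  constructor
  · -- forward direction, by contradiction
    rintro ⟨t, ht2, hlt⟩
    by_contra hcon
    push_neg at hcon
    obtain ⟨hge, hmem⟩ := hcon
    -- squared distance comparison at c
    have hDsq : ‖p 0 - c‖ ^ 2 ≤ ‖e - c‖ ^ 2 :=
      pow_le_pow_left₀ (norm_nonneg _) hge 2
    simp only [norm_sq3, E3.sub_apply] at hDsq
    rw [hcT] at hDsq
    -- strict inequalities at t, in coordinates
    rw [lt_min_iff, lt_min_iff] at hlt
    obtain ⟨h0, h1, h2⟩ := hlt
    rw [norm_lt3] at h0 h1 h2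
    simp only [E3.sub_apply] at h0 h1 h2
    rw [ht2] at h0 h1 h2
    have hX0 : 0 < (t 0 - p 0 0) ^ 2 + (t 1 - p 0 1) ^ 2 + (0 - p 0 2) ^ 2
        - ((t 0 - e 0) ^ 2 + (t 1 - e 1) ^ 2 + (0 - e 2) ^ 2) := by linarith
    have hX1 : 0 < (t 0 - p 1 0) ^ 2 + (t 1 - p 1 1) ^ 2 + (0 - p 1 2) ^ 2
        - ((t 0 - e 0) ^ 2 + (t 1 - e 1) ^ 2 + (0 - e 2) ^ 2) := by linarith
    have hX2 : 0 < (t 0 - p 2 0) ^ 2 + (t 1 - p 2 1) ^ 2 + (0 - p 2 2) ^ 2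
        - ((t 0 - e 0) ^ 2 + (t 1 - e 1) ^ 2 + (0 - e 2) ^ 2) := by linarith
    -- extract convex weights
    rw [convexHull_insert ⟨projT (p 1), Set.mem_insert _ _⟩, mem_convexJoin] at hmem
    obtain ⟨a', ha', z, hz, hseg⟩ := hmem
    rw [Set.mem_singleton_iff] at ha'
    subst ha'
    rw [convexHull_pair] at hz
    obtain ⟨b1, b2, hb1, hb2, hb, hzeq⟩ := hz
    obtain ⟨a1, a2, ha1, ha2, ha, haeq⟩ := hseg
    have hz0 : b1 * p 1 0 + b2 * p 2 0 = z 0 := by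
      have h := congrArg (fun v : EuclideanSpace ℝ (Fin 3) => v 0) hzeq
      simpa only [E3.add_apply, E3.smul_apply, projT_apply0] using h
    have hz1 : b1 * p 1 1 + b2 * p 2 1 = z 1 := by
      have h := congrArg (fun v : EuclideanSpace ℝ (Fin 3) => v 1) hzeq
      simpa only [E3.add_apply, E3.smul_apply, projT_apply1] using h
    have ha0 : a1 * p 0 0 + a2 * z 0 = e 0 := by
      have h := congrArg (fun v : EuclideanSpace ℝ (Fin 3) => v 0) haeq
      simpa only [E3.add_apply, E3.smul_apply, projT_apply0] using h
    have ha1' : a1 * p 0 1 + a2 * z 1 = e 1 := by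
      have h := congrArg (fun v : EuclideanSpace ℝ (Fin 3) => v 1) haeq
      simpa only [E3.add_apply, E3.smul_apply, projT_apply1] using h
    set w0 := a1 with hw0def
    set w1 := a2 * b1 with hw1def
    set w2 := a2 * b2 with hw2def
    have hw0 : 0 ≤ w0 := ha1
    have hw1 : 0 ≤ w1 := mul_nonneg ha2 hb1
    have hw2 : 0 ≤ w2 := mul_nonneg ha2 hb2
    have hwsum : w0 + w1 + w2 = 1 := by
      rw [hw0def, hw1def, hw2def]; linear_combination ha + a2 * hb
    have he0 : w0 * p 0 0 + w1 * p 1 0 + w2 * p 2 0 = e 0 := by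
      rw [hw0def, hw1def, hw2def]; linear_combination ha0 + a2 * hz0
    have he1 : w0 * p 0 1 + w1 * p 1 1 + w2 * p 2 1 = e 1 := by
      rw [hw0def, hw1def, hw2def]; linear_combination ha1' + a2 * hz1
    -- the key identity: the weighted sum of the margins is constant and equals the
    -- margin at c
    have key : w0 * ((t 0 - p 0 0) ^ 2 + (t 1 - p 0 1) ^ 2 + (0 - p 0 2) ^ 2
          - ((t 0 - e 0) ^ 2 + (t 1 - e 1) ^ 2 + (0 - e 2) ^ 2))
        + w1 * ((t 0 - p 1 0) ^ 2 + (t 1 - p 1 1) ^ 2 + (0 - p 1 2) ^ 2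
          - ((t 0 - e 0) ^ 2 + (t 1 - e 1) ^ 2 + (0 - e 2) ^ 2))
        + w2 * ((t 0 - p 2 0) ^ 2 + (t 1 - p 2 1) ^ 2 + (0 - p 2 2) ^ 2
          - ((t 0 - e 0) ^ 2 + (t 1 - e 1) ^ 2 + (0 - e 2) ^ 2))
        = (c 0 - p 0 0) ^ 2 + (c 1 - p 0 1) ^ 2 + (0 - p 0 2) ^ 2
          - ((c 0 - e 0) ^ 2 + (c 1 - e 1) ^ 2 + (e 2) ^ 2) := by
      linear_combination (-2 * (t 0 - c 0)) * he0 + (-2 * (t 1 - c 1)) * he1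
        + (2 * (t 0 - c 0) * (e 0) + 2 * (t 1 - c 1) * (e 1)
            + ((c 0 - p 0 0) ^ 2 + (c 1 - p 0 1) ^ 2 + (0 - p 0 2) ^ 2
              - ((c 0 - e 0) ^ 2 + (c 1 - e 1) ^ 2 + (e 2) ^ 2))) * hwsum
        + (-(w1 + w2)) * hr01 + (-w2) * hr12
    -- but the weighted sum is positive while the rhs is ≤ 0
    have hwpos : 0 < w0 ∨ 0 < w1 ∨ 0 < w2 := by
      by_contra hcon'
      push_neg at hcon'
      linarith [hcon'.1, hcon'.2.1, hcon'.2.2]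
    rcases hwpos with h | h | h
    · linarith [key, hDsq, mul_pos h hX0, mul_nonneg hw1 hX1.le, mul_nonneg hw2 hX2.le]
    · linarith [key, hDsq, mul_pos h hX1, mul_nonneg hw0 hX0.le, mul_nonneg hw2 hX2.le]
    · linarith [key, hDsq, mul_pos h hX2, mul_nonneg hw0 hX0.le, mul_nonneg hw1 hX1.le]
  · rintro (hlt | hout)
    · -- aim at c
      refine ⟨c, hcT, ?_⟩
      rw [lt_min_iff, lt_min_iff]
      rw [norm_sub_rev e c, norm_sub_rev (p 0) c] at hlt
      exact ⟨hlt, by rw [← hc1]; exact hlt, by rw [← hc2, ← hc1]; exact hlt⟩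
    · -- separate projT e from the triangle and run far in that direction
      obtain ⟨f, u, hfu, hufe⟩ := geometric_hahn_banach_closed_point
        (convex_convexHull ℝ _) ((Set.toFinite _).isClosed_convexHull (𝕜 := ℝ)) hout
      set d0 := f (mk3 1 0 0) with hd0
      set d1 := f (mk3 0 1 0) with hd1
      have hfval : ∀ q : EuclideanSpace ℝ (Fin 3), f (projT q) = q 0 * d0 + q 1 * d1 := by
        intro q
        rw [show projT q = mk3 (q 0) (q 1) 0 from rfl, mk3_ext, map_add, map_smul, map_smul]
        simp [hd0, hd1]
      have hmem0 : projT (p 0) ∈ convexHull ℝ ({projT (p 0), projT (p 1), projT (p 2)} :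
          Set (EuclideanSpace ℝ (Fin 3))) :=
        subset_convexHull ℝ _ (Set.mem_insert _ _)
      have hmem1 : projT (p 1) ∈ convexHull ℝ ({projT (p 0), projT (p 1), projT (p 2)} :
          Set (EuclideanSpace ℝ (Fin 3))) :=
        subset_convexHull ℝ _ (Set.mem_insert_of_mem _ (Set.mem_insert _ _))
      have hmem2 : projT (p 2) ∈ convexHull ℝ ({projT (p 0), projT (p 1), projT (p 2)} :
          Set (EuclideanSpace ℝ (Fin 3))) :=
        subset_convexHull ℝ _ (Set.mem_insert_of_mem _ (Set.mem_insert_of_mem _ rfl))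
      have hδ : ∀ i : Fin 3, 0 < (e 0 - p i 0) * d0 + (e 1 - p i 1) * d1 := by
        intro i
        have hpi : f (projT (p i)) < u := by
          fin_cases i
          · exact hfu _ hmem0
          · exact hfu _ hmem1
          · exact hfu _ hmem2
        have h1 := hfval (p i)
        have h2 := hfval e
        nlinarith [hpi, hufe]
      obtain ⟨δ, hδpos, hδle⟩ :
          ∃ δ : ℝ, 0 < δ ∧ ∀ i : Fin 3, δ ≤ (e 0 - p i 0) * d0 + (e 1 - p i 1) * d1 := by
        refine ⟨min ((e 0 - p 0 0) * d0 + (e 1 - p 0 1) * d1)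
          (min ((e 0 - p 1 0) * d0 + (e 1 - p 1 1) * d1)
               ((e 0 - p 2 0) * d0 + (e 1 - p 2 1) * d1)),
          lt_min (hδ 0) (lt_min (hδ 1) (hδ 2)), ?_⟩
        intro i
        fin_cases i
        · exact min_le_left _ _
        · exact le_trans (min_le_right _ _) (min_le_left _ _)
        · exact le_trans (min_le_right _ _) (min_le_right _ _)
      obtain ⟨K, hKnonneg, hKle⟩ :
          ∃ K : ℝ, 0 ≤ K ∧ ∀ i : Fin 3,
            -K ≤ (e 0 - p i 0) ^ 2 + (e 1 - p i 1) ^ 2 + (p i 2) ^ 2 - (e 2) ^ 2 := by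
        have tri : ∀ a b c' : ℝ,
            -(|a| + |b| + |c'|) ≤ a ∧ -(|a| + |b| + |c'|) ≤ b ∧ -(|a| + |b| + |c'|) ≤ c' :=
          fun a b c' => ⟨by linarith [neg_abs_le a, abs_nonneg b, abs_nonneg c'],
            by linarith [neg_abs_le b, abs_nonneg a, abs_nonneg c'],
            by linarith [neg_abs_le c', abs_nonneg a, abs_nonneg b]⟩
        refine ⟨|(e 0 - p 0 0) ^ 2 + (e 1 - p 0 1) ^ 2 + (p 0 2) ^ 2 - (e 2) ^ 2|
          + |(e 0 - p 1 0) ^ 2 + (e 1 - p 1 1) ^ 2 + (p 1 2) ^ 2 - (e 2) ^ 2|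
          + |(e 0 - p 2 0) ^ 2 + (e 1 - p 2 1) ^ 2 + (p 2 2) ^ 2 - (e 2) ^ 2|,
          by positivity, ?_⟩
        intro i
        fin_cases i
        · exact (tri _ _ _).1
        · exact (tri _ _ _).2.1
        · exact (tri _ _ _).2.2
      obtain ⟨s, hspos, hsδ⟩ : ∃ s : ℝ, 0 < s ∧ 2 * s * δ = K + 1 :=
        ⟨(K + 1) / (2 * δ), by positivity, by field_simp⟩
      refine ⟨mk3 (e 0 + s * d0) (e 1 + s * d1) 0, rfl, ?_⟩
      rw [lt_min_iff, lt_min_iff, norm_lt3, norm_lt3, norm_lt3]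
      simp only [E3.sub_apply, show (mk3 (e 0 + s * d0) (e 1 + s * d1) 0) 0 = e 0 + s * d0
        from rfl, show (mk3 (e 0 + s * d0) (e 1 + s * d1) 0) 1 = e 1 + s * d1 from rfl,
        show (mk3 (e 0 + s * d0) (e 1 + s * d1) 0) 2 = 0 from rfl]
      have hmain : ∀ i : Fin 3,
          (e 0 + s * d0 - e 0) ^ 2 + (e 1 + s * d1 - e 1) ^ 2 + (0 - e 2) ^ 2
          < (e 0 + s * d0 - p i 0) ^ 2 + (e 1 + s * d1 - p i 1) ^ 2 + (0 - p i 2) ^ 2 := by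
        intro i
        have h1 : 2 * s * δ ≤ 2 * s * ((e 0 - p i 0) * d0 + (e 1 - p i 1) * d1) :=
          mul_le_mul_of_nonneg_left (hδle i) (by positivity)
        have h2 := hKle i
        nlinarith [h1, h2, hsδ]
      exact ⟨hmain 0, hmain 1, hmain 2⟩
end
end
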